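/- arXiv:2412.03245 — 3 statements merged into one kernel-verified Lean document; each statement's English description precedes it below -/
import Mathlib

section
/- Let A(𝔻) denote the disc algebra. A map T : A(𝔻) → A(𝔻) is an algebra automorphism (bijective, ℂ-linear and multiplicative) if and only if there exists φ ∈ Aut(𝔻) such that T f = f ∘ φ̂ for all f ∈ A(𝔻), where φ̂ denotes the continuous extension of φ to the closed unit disc. -/
open Complex Metric Set

local notation "𝔻" => Complex.UnitDisc

/-- The closed unit disc, as a subset of `ℂ`. -/
def cD : Set ℂ := Metric.closedBall 0 1

/-- A function on the open unit disc is analytic (holomorphic):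
it is the restriction of a function differentiable on the open unit ball. -/
def HolOn (f : 𝔻 → ℂ) : Prop :=
  ∃ F : ℂ → ℂ, DifferentiableOn ℂ F (Metric.ball 0 1) ∧ ∀ z : 𝔻, F ↑z = f z

/-- Membership in `H^∞`, the algebra of bounded analytic functions on the unit disc. -/
def MemHinf (f : 𝔻 → ℂ) : Prop :=
  HolOn f ∧ ∃ M : ℝ, ∀ z : 𝔻, ‖f z‖ ≤ M

/-- Membership in the disc algebra `A(𝔻)`: continuous on the closed unit disc,
analytic in its interior. -/
def MemDiscAlg (f : ↥cD → ℂ) : Prop :=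
  ∃ F : ℂ → ℂ, ContinuousOn F cD ∧ DifferentiableOn ℂ F (Metric.ball 0 1) ∧
    ∀ z : ↥cD, F ↑z = f z

/-- `φ ∈ Aut(𝔻)`: a bijective analytic self-map of the unit disc. -/
def IsDiscAut (φ : 𝔻 → 𝔻) : Prop :=
  (∃ F : ℂ → ℂ, DifferentiableOn ℂ F (Metric.ball 0 1) ∧ ∀ z : 𝔻, F ↑z = ↑(φ z)) ∧
  Function.Bijective φ

/-- A Möbius automorphism of the unit disc, given by its global formula
`Φ z = η (a - z) / (1 - conj a * z)` with `|a| < 1`, `|η| = 1`; this is the analytic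
extension to (a neighbourhood of) the closed unit disc of a disc automorphism. -/
def IsMobius (Φ : ℂ → ℂ) : Prop :=
  ∃ a η : ℂ, ‖a‖ < 1 ∧ ‖η‖ = 1 ∧
    ∀ z : ℂ, Φ z = η * (a - z) / (1 - (starRingEnd ℂ) a * z)

/-- `T` is an algebra automorphism of the set `A` of complex-valued functions:
a bijective, `ℂ`-linear and multiplicative self-map of `A`. -/
def IsAlgAutOn {ι : Type} (A : Set (ι → ℂ)) (T : (ι → ℂ) → (ι → ℂ)) : Prop :=
  (∀ f ∈ A, T f ∈ A) ∧
  (∀ f ∈ A, ∀ g ∈ A, T (f + g) = T f + T g) ∧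
  (∀ (c : ℂ), ∀ f ∈ A, T (c • f) = c • T f) ∧
  (∀ f ∈ A, ∀ g ∈ A, T (f * g) = T f * T g) ∧
  Set.InjOn T A ∧ Set.SurjOn T A A

/-- The subalgebra `ψ H^∞ = {ψ · g : g ∈ H^∞}`. -/
def psiH (ψ : 𝔻 → ℂ) : Set (𝔻 → ℂ) :=
  {f | ∃ g, MemHinf g ∧ f = fun z => ψ z * g z}

/-- The subalgebra `ψ A(𝔻) = {ψ · g : g ∈ A(𝔻)}`. -/
def psiA (ψ : ↥cD → ℂ) : Set (↥cD → ℂ) :=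
  {f | ∃ g, MemDiscAlg g ∧ f = fun z => ψ z * g z}

/-- The composition operator `C_φ : f ↦ f ∘ φ` is a well-defined algebra automorphism
of the set `A` (it is automatically linear and multiplicative). -/
def CompAutOn (A : Set (𝔻 → ℂ)) (φ : 𝔻 → 𝔻) : Prop :=
  (∀ f ∈ A, f ∘ φ ∈ A) ∧ Set.InjOn (fun f => f ∘ φ) A ∧ Set.SurjOn (fun f => f ∘ φ) A A

/-- The Möbius factor `τ_a(z) = (a - z)/(1 - conj a · z)`. -/
noncomputable def mobius (a z : ℂ) : ℂ := (a - z) / (1 - (starRingEnd ℂ) a * z)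

/-- `f` has a zero of order (multiplicity) `k` at `w`:
`f z = (z - w)^k g z` with `g` analytic and `g w ≠ 0`. -/
def ZeroOrderAt (f : 𝔻 → ℂ) (w : 𝔻) (k : ℕ) : Prop :=
  ∃ g : 𝔻 → ℂ, HolOn g ∧ g w ≠ 0 ∧ ∀ z : 𝔻, f z = ((z : ℂ) - (w : ℂ)) ^ k * g z

/-- `g` is an invertible element of `H^∞`. -/
def InvHinf (g : 𝔻 → ℂ) : Prop :=
  MemHinf g ∧ ∃ h : 𝔻 → ℂ, MemHinf h ∧ ∀ z, g z * h z = 1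

/-- `g` is an invertible element of the disc algebra `A(𝔻)`. -/
def InvDiscAlg (g : ↥cD → ℂ) : Prop :=
  MemDiscAlg g ∧ ∃ h : ↥cD → ℂ, MemDiscAlg h ∧ ∀ z, g z * h z = 1

section Infra
open Topology Filter

/-- The complex absolute value, as a bundled absolute value (the norm). -/
noncomputable def Complex.abs : AbsoluteValue ℂ ℝ where
  toFun z := ‖z‖
  map_mul' := norm_mul
  nonneg' := norm_nonneg
  eq_zero' _ := norm_eq_zero
  add_le' := norm_add_le

lemma Complex.norm_eq_abs (z : ℂ) : ‖z‖ = Complex.abs z := rfl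

lemma Complex.abs_conj (z : ℂ) : Complex.abs ((starRingEnd ℂ) z) = Complex.abs z :=
  Complex.norm_conj z

lemma Complex.sq_abs (z : ℂ) : Complex.abs z ^ 2 = normSq z := Complex.sq_norm z

lemma Complex.abs_apply {z : ℂ} : Complex.abs z = Real.sqrt (normSq z) := Complex.norm_def z

lemma Complex.continuous_abs : Continuous (fun z : ℂ => Complex.abs z) := continuous_norm

lemma Complex.abs_two : Complex.abs 2 = 2 := by
  rw [← Complex.norm_eq_abs]; norm_num

lemma Complex.abs_le_abs_of_mapsTo_ball_self {f : ℂ → ℂ}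
    (hd : DifferentiableOn ℂ f (ball 0 1)) (h_maps : MapsTo f (ball 0 1) (ball 0 1))
    (h₀ : f 0 = 0) {z : ℂ} (hz : Complex.abs z < 1) : Complex.abs (f z) ≤ Complex.abs z :=
  Complex.norm_le_norm_of_mapsTo_ball hd (h_maps.mono_right ball_subset_closedBall) h₀ hz

lemma mem_cD_iff {z : ℂ} : z ∈ cD ↔ Complex.abs z ≤ 1 := by
  simp [cD, Complex.norm_eq_abs]

lemma ball_subset_cD : ball (0:ℂ) 1 ⊆ cD := ball_subset_closedBall

lemma mob_normSq (a z : ℂ) :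
    normSq (1 - (starRingEnd ℂ) a * z) - normSq (a - z)
      = (1 - normSq a) * (1 - normSq z) := by
  simp [Complex.normSq_apply, Complex.mul_re, Complex.mul_im, Complex.sub_re, Complex.sub_im]
  ring

lemma mob_denom_ne {a z : ℂ} (ha : Complex.abs a < 1) (hz : Complex.abs z ≤ 1) :
    1 - (starRingEnd ℂ) a * z ≠ 0 := by
  intro h
  have h1 : (starRingEnd ℂ) a * z = 1 := by linear_combination -h
  have : Complex.abs ((starRingEnd ℂ) a * z) < 1 := by
    rw [map_mul, Complex.abs_conj]
    calc Complex.abs a * Complex.abs z ≤ Complex.abs a * 1 :=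
      mul_le_mul_of_nonneg_left hz (Complex.abs.nonneg a)
    _ < 1 := by simpa using ha
  rw [h1] at this; simp at this

lemma abs_mob_le {a η z : ℂ} (ha : Complex.abs a < 1) (hη : Complex.abs η = 1)
    (hz : Complex.abs z ≤ 1) :
    Complex.abs (η * (a - z) / (1 - (starRingEnd ℂ) a * z)) ≤ 1 := by
  rw [map_div₀, map_mul, hη, one_mul, div_le_one (by
    exact (Complex.abs.pos (mob_denom_ne ha hz)))]
  have h2 : normSq (a - z) ≤ normSq (1 - (starRingEnd ℂ) a * z) := by
    have := mob_normSq a z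
    have ha' : normSq a ≤ 1 := by rw [← Complex.sq_abs]; nlinarith [Complex.abs.nonneg a]
    have hz' : normSq z ≤ 1 := by rw [← Complex.sq_abs]; nlinarith [Complex.abs.nonneg z]
    nlinarith
  calc Complex.abs (a - z) = Real.sqrt (normSq (a - z)) := Complex.abs_apply
    _ ≤ Real.sqrt (normSq (1 - (starRingEnd ℂ) a * z)) := Real.sqrt_le_sqrt h2
    _ = _ := Complex.abs_apply.symm

lemma abs_mob_lt {a η z : ℂ} (ha : Complex.abs a < 1) (hη : Complex.abs η = 1)
    (hz : Complex.abs z < 1) :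
    Complex.abs (η * (a - z) / (1 - (starRingEnd ℂ) a * z)) < 1 := by
  rw [map_div₀, map_mul, hη, one_mul, div_lt_one (by
    exact (Complex.abs.pos (mob_denom_ne ha hz.le)))]
  have h2 : normSq (a - z) < normSq (1 - (starRingEnd ℂ) a * z) := by
    have := mob_normSq a z
    have ha' : normSq a < 1 := by rw [← Complex.sq_abs]; nlinarith [Complex.abs.nonneg a]
    have hz' : normSq z < 1 := by rw [← Complex.sq_abs]; nlinarith [Complex.abs.nonneg z]
    nlinarith
  have := Real.sqrt_lt_sqrt (Complex.normSq_nonneg _) h2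
  rwa [← Complex.abs_apply, ← Complex.abs_apply] at this

lemma memDiscAlg_const (c : ℂ) : MemDiscAlg (fun _ => c) :=
  ⟨fun _ => c, continuousOn_const, differentiableOn_const c, fun _ => rfl⟩

lemma memDiscAlg_one : MemDiscAlg (1 : ↥cD → ℂ) := memDiscAlg_const 1

lemma memDiscAlg_id : MemDiscAlg (fun z : ↥cD => (z : ℂ)) :=
  ⟨id, continuousOn_id, differentiableOn_id, fun _ => rfl⟩

lemma MemDiscAlg.add {f g : ↥cD → ℂ} (hf : MemDiscAlg f) (hg : MemDiscAlg g) :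
    MemDiscAlg (f + g) := by
  obtain ⟨F, hFc, hFd, hFe⟩ := hf
  obtain ⟨G, hGc, hGd, hGe⟩ := hg
  exact ⟨F + G, hFc.add hGc, hFd.add hGd, fun z => by simp [hFe z, hGe z]⟩

lemma MemDiscAlg.mul {f g : ↥cD → ℂ} (hf : MemDiscAlg f) (hg : MemDiscAlg g) :
    MemDiscAlg (f * g) := by
  obtain ⟨F, hFc, hFd, hFe⟩ := hf
  obtain ⟨G, hGc, hGd, hGe⟩ := hg
  exact ⟨F * G, hFc.mul hGc, hFd.mul hGd, fun z => by simp [hFe z, hGe z]⟩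

lemma MemDiscAlg.smul (c : ℂ) {f : ↥cD → ℂ} (hf : MemDiscAlg f) :
    MemDiscAlg (c • f) := by
  obtain ⟨F, hFc, hFd, hFe⟩ := hf
  exact ⟨c • F, hFc.const_smul c, hFd.const_smul c, fun z => by simp [hFe z]⟩

lemma MemDiscAlg.pow {f : ↥cD → ℂ} (hf : MemDiscAlg f) (n : ℕ) :
    MemDiscAlg (f ^ n) := by
  induction n with
  | zero => simpa [pow_zero] using memDiscAlg_one
  | succ n ih => rw [pow_succ]; exact ih.mul hf

lemma MemDiscAlg.inv {f : ↥cD → ℂ} (hf : MemDiscAlg f) (h0 : ∀ z, f z ≠ 0) :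
    MemDiscAlg (fun z => (f z)⁻¹) := by
  obtain ⟨F, hFc, hFd, hFe⟩ := hf
  have hF0 : ∀ x ∈ cD, F x ≠ 0 := fun x hx => by
    rw [show x = ((⟨x, hx⟩ : ↥cD) : ℂ) from rfl, hFe]; exact h0 _
  exact ⟨fun x => (F x)⁻¹, hFc.inv₀ hF0,
    DifferentiableOn.inv hFd (fun x hx => hF0 x (ball_subset_cD hx)),
    fun z => by show (F ↑z)⁻¹ = (f z)⁻¹; rw [hFe z]⟩

lemma eqOn_cD_of_eqOn_ball {F G : ℂ → ℂ} (hF : ContinuousOn F cD) (hG : ContinuousOn G cD)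
    (h : EqOn F G (ball 0 1)) : EqOn F G cD := by
  intro x hx
  have hx' : x ∈ closure (ball (0:ℂ) 1) := by
    rw [closure_ball (0:ℂ) one_ne_zero]; exact hx
  have hne : (𝓝[ball (0:ℂ) 1] x).NeBot := mem_closure_iff_nhdsWithin_neBot.1 hx'
  have hFt : Filter.Tendsto F (𝓝[ball (0:ℂ) 1] x) (𝓝 (F x)) :=
    ((hF x hx).mono ball_subset_cD)
  have hGt : Filter.Tendsto F (𝓝[ball (0:ℂ) 1] x) (𝓝 (G x)) := by
    have hGt' : Filter.Tendsto G (𝓝[ball (0:ℂ) 1] x) (𝓝 (G x)) :=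
      (hG x hx).mono ball_subset_cD
    refine hGt'.congr' ?_
    filter_upwards [self_mem_nhdsWithin] with y hy
    exact (h hy).symm
  exact tendsto_nhds_unique hFt hGt

lemma memDiscAlg_comp {Ξ : ℂ → ℂ} (hc : ContinuousOn Ξ cD) (hd : DifferentiableOn ℂ Ξ (ball 0 1))
    (hmaps : MapsTo Ξ cD cD) (hmb : MapsTo Ξ (ball 0 1) (ball 0 1))
    {ξ : ↥cD → ↥cD} (hξ : ∀ z : ↥cD, (↑(ξ z) : ℂ) = Ξ ↑z)
    {f : ↥cD → ℂ} (hf : MemDiscAlg f) : MemDiscAlg (f ∘ ξ) := by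
  obtain ⟨F, hFc, hFd, hFe⟩ := hf
  refine ⟨F ∘ Ξ, hFc.comp hc hmaps, hFd.comp hd hmb, ?_⟩
  · intro z
    have : F (Ξ ↑z) = F ↑(ξ z) := by rw [hξ z]
    simpa [Function.comp] using this.trans (hFe (ξ z))

lemma mob_contOn {a η : ℂ} (ha : Complex.abs a < 1) :
    ContinuousOn (fun z => η * (a - z) / (1 - (starRingEnd ℂ) a * z)) cD := by
  apply ContinuousOn.div
  · fun_prop
  · fun_prop
  · intro z hz
    exact mob_denom_ne ha (mem_cD_iff.1 hz)

lemma mob_diffOn {a η : ℂ} (ha : Complex.abs a < 1) :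
    DifferentiableOn ℂ (fun z => η * (a - z) / (1 - (starRingEnd ℂ) a * z)) (ball 0 1) := by
  apply DifferentiableOn.div
  · fun_prop
  · fun_prop
  · intro z hz
    rw [mem_ball_zero_iff] at hz
    exact mob_denom_ne ha (le_of_lt hz)

lemma mob_inv {a η z : ℂ} (ha : Complex.abs a < 1) (hη : Complex.abs η = 1)
    (hz : Complex.abs z ≤ 1) :
    (starRingEnd ℂ) η * (η * a - (η * (a - z) / (1 - (starRingEnd ℂ) a * z))) /
      (1 - (starRingEnd ℂ) (η * a) * (η * (a - z) / (1 - (starRingEnd ℂ) a * z))) = z := by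
  have hηη : (starRingEnd ℂ) η * η = 1 := by
    rw [mul_comm, Complex.mul_conj]
    norm_cast
    rw [← Complex.sq_abs, hη]; norm_num
  have hd1 : 1 - (starRingEnd ℂ) a * z ≠ 0 := mob_denom_ne ha hz
  have haη : Complex.abs (η * a) < 1 := by rw [map_mul, hη, one_mul]; exact ha
  have hd2 : 1 - (starRingEnd ℂ) (η * a) * (η * (a - z) / (1 - (starRingEnd ℂ) a * z)) ≠ 0 :=
    mob_denom_ne haη (abs_mob_le ha hη hz)
  rw [div_eq_iff hd2, map_mul]
  have e1 : (starRingEnd ℂ) η * (η * a - η * (a - z) / (1 - (starRingEnd ℂ) a * z))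
      = ((starRingEnd ℂ) η * η) * (a - (a - z) / (1 - (starRingEnd ℂ) a * z)) := by ring
  have e2 : z * (1 - (starRingEnd ℂ) η * (starRingEnd ℂ) a *
      (η * (a - z) / (1 - (starRingEnd ℂ) a * z)))
      = z * (1 - ((starRingEnd ℂ) η * η) * (starRingEnd ℂ) a * (a - z) /
        (1 - (starRingEnd ℂ) a * z)) := by ring
  rw [e1, e2, hηη]
  have hinv : (1 - (starRingEnd ℂ) a * z) * (1 - (starRingEnd ℂ) a * z)⁻¹ = 1 :=
    mul_inv_cancel₀ hd1
  linear_combination (-(a - z)) * hinv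

lemma char_eval (χ : (↥cD → ℂ) → ℂ)
    (hadd : ∀ f, MemDiscAlg f → ∀ g, MemDiscAlg g → χ (f + g) = χ f + χ g)
    (hsmul : ∀ (c : ℂ), ∀ f, MemDiscAlg f → χ (c • f) = c * χ f)
    (hmul : ∀ f, MemDiscAlg f → ∀ g, MemDiscAlg g → χ (f * g) = χ f * χ g)
    (hone : χ 1 = 1)
    (hnz : ∀ f, MemDiscAlg f → (∀ z, f z ≠ 0) → χ f ≠ 0) :
    ∃ z₀ : ↥cD, ∀ f, MemDiscAlg f → χ f = f z₀ := by
  have hspec : ∀ f, MemDiscAlg f → ∃ z, f z = χ f := by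
    intro f hf
    by_contra hcon
    push_neg at hcon
    have hg : MemDiscAlg (f + (-χ f) • (1 : ↥cD → ℂ)) := hf.add (memDiscAlg_one.smul _)
    have hχg : χ (f + (-χ f) • (1 : ↥cD → ℂ)) = 0 := by
      rw [hadd _ hf _ (memDiscAlg_one.smul _), hsmul _ _ memDiscAlg_one, hone]; ring
    refine hnz _ hg ?_ hχg
    intro z
    have hv : (f + (-χ f) • (1 : ↥cD → ℂ)) z = f z - χ f := by
      simp only [Pi.add_apply, Pi.smul_apply, Pi.one_apply, smul_eq_mul]; ring
    rw [hv]
    exact sub_ne_zero.2 (hcon z)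
  obtain ⟨zw, hzw⟩ := hspec _ memDiscAlg_id
  set ζ : ℂ := χ (fun z : ↥cD => (z : ℂ)) with hζdef
  have hζ : Complex.abs ζ ≤ 1 := by
    rw [← hzw]; exact mem_cD_iff.1 zw.2
  set z₀ : ↥cD := ⟨ζ, mem_cD_iff.2 hζ⟩ with hz₀def
  refine ⟨z₀, ?_⟩
  intro f hf
  obtain ⟨F, hFc, hFd, hFe⟩ := hf
  have hfA : MemDiscAlg f := ⟨F, hFc, hFd, hFe⟩
  have hFζ : F ζ = f z₀ := hFe z₀
  rcases lt_or_eq_of_le hζ with hlt | heq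
  · -- interior case
    have hζb : ζ ∈ ball (0:ℂ) 1 := mem_ball_zero_iff.2 hlt
    set G := dslope F ζ with hGdef
    have hGd : DifferentiableOn ℂ G (ball 0 1) :=
      (Complex.differentiableOn_dslope (isOpen_ball.mem_nhds hζb)).mpr hFd
    have hGc : ContinuousOn G cD := by
      intro x hx
      rcases eq_or_ne x ζ with rfl | hne
      · exact ((hGd.differentiableAt (isOpen_ball.mem_nhds hζb)).continuousAt).continuousWithinAt
      · exact (continuousWithinAt_dslope_of_ne hne).2 (hFc x hx)
    have hg : MemDiscAlg (fun z : ↥cD => G ↑z) := ⟨G, hGc, hGd, fun _ => rfl⟩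
    have key : ((fun z : ↥cD => (z:ℂ)) + (-ζ) • 1) * (fun z : ↥cD => G ↑z)
        = f + (-(f z₀)) • 1 := by
      funext z
      have h1 : ((z:ℂ) - ζ) • G ↑z = F ↑z - F ζ := sub_smul_dslope F ζ ↑z
      rw [smul_eq_mul, hFe z, hFζ] at h1
      simp only [Pi.mul_apply, Pi.add_apply, Pi.smul_apply, Pi.one_apply, smul_eq_mul]
      linear_combination h1
    have hA1 : MemDiscAlg ((fun z : ↥cD => (z:ℂ)) + (-ζ) • 1) :=
      memDiscAlg_id.add (memDiscAlg_one.smul _)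
    have hkey := hmul _ hA1 _ hg
    rw [key] at hkey
    have l1 : χ (f + (-(f z₀)) • 1) = χ f - f z₀ := by
      rw [hadd _ hfA _ (memDiscAlg_one.smul _), hsmul _ _ memDiscAlg_one, hone]; ring
    have l2 : χ ((fun z : ↥cD => (z:ℂ)) + (-ζ) • 1) = 0 := by
      rw [hadd _ memDiscAlg_id _ (memDiscAlg_one.smul _), hsmul _ _ memDiscAlg_one, hone,
        ← hζdef]
      ring
    rw [l1, l2, zero_mul] at hkey
    linear_combination hkey
  · -- boundary case
    have hζζ : (starRingEnd ℂ) ζ * ζ = 1 := by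
      rw [mul_comm, Complex.mul_conj]
      norm_cast
      rw [← Complex.sq_abs, heq]; norm_num
    set q : ↥cD → ℂ := f + (-(f z₀)) • 1 with hqdef
    have hq : MemDiscAlg q := hfA.add (memDiscAlg_one.smul _)
    have hχq : χ q = χ f - f z₀ := by
      rw [hqdef, hadd _ hfA _ (memDiscAlg_one.smul _), hsmul _ _ memDiscAlg_one, hone]; ring
    set h : ↥cD → ℂ :=
      ((1:ℂ)/2) • 1 + ((starRingEnd ℂ) ζ / 2) • (fun z : ↥cD => (z:ℂ)) with hhdef
    have hh : MemDiscAlg h := (memDiscAlg_one.smul _).add (memDiscAlg_id.smul _)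
    have hχh : χ h = 1 := by
      rw [hhdef, hadd _ (memDiscAlg_one.smul _) _ (memDiscAlg_id.smul _),
        hsmul _ _ memDiscAlg_one, hsmul _ _ memDiscAlg_id, hone, ← hζdef]
      linear_combination hζζ / 2
    have hpowχ : ∀ n : ℕ, χ (h ^ n) = 1 := by
      intro n
      induction n with
      | zero => simpa using hone
      | succ n ih => rw [pow_succ, hmul _ (hh.pow n) _ hh, ih, hχh, mul_one]
    have hχn : ∀ n : ℕ, χ (h ^ n * q) = χ f - f z₀ := by
      intro n
      rw [hmul _ (hh.pow n) _ hq, hpowχ n, one_mul, hχq]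
    have habs : ∀ z : ↥cD, h z = (1 + (starRingEnd ℂ) ζ * ↑z) / 2 := by
      intro z
      simp only [hhdef, Pi.add_apply, Pi.smul_apply, Pi.one_apply, smul_eq_mul]
      ring
    set Hc : ℂ → ℂ := fun x => (1 + (starRingEnd ℂ) ζ * x) / 2 with hHcdef
    have hHle : ∀ x ∈ cD, Complex.abs (Hc x) ≤ 1 := by
      intro x hx
      have hw : Complex.abs ((starRingEnd ℂ) ζ * x) ≤ 1 := by
        rw [map_mul, Complex.abs_conj, heq, one_mul]; exact mem_cD_iff.1 hx
      have h2 : Complex.abs (1 + (starRingEnd ℂ) ζ * x) ≤ 2 := by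
        calc Complex.abs (1 + (starRingEnd ℂ) ζ * x)
            ≤ Complex.abs 1 + Complex.abs ((starRingEnd ℂ) ζ * x) := Complex.abs.add_le _ _
          _ ≤ 1 + 1 := by simpa using hw
          _ = 2 := by norm_num
      rw [hHcdef]
      simp only [map_div₀, Complex.abs_two]
      rw [div_le_one (by norm_num)]
      exact h2
    have hζD : ζ ∈ cD := mem_cD_iff.2 hζ
    have main : ∀ ε : ℝ, 0 < ε → Complex.abs (χ f - f z₀) ≤ ε := by
      intro ε hε
      have hcw : ContinuousWithinAt F cD ζ := hFc ζ hζD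
      rw [Metric.continuousWithinAt_iff] at hcw
      obtain ⟨δ, hδ0, hδF⟩ := hcw ε hε
      obtain ⟨C, hC⟩ := (isCompact_closedBall (0:ℂ) 1).exists_bound_of_continuousOn hFc
      have hC0 : 0 ≤ C := le_trans (norm_nonneg (F 0))
        (hC 0 (by simp [mem_closedBall]))
      set C' : ℝ := 2 * C + 1 with hC'def
      have hC'0 : 0 < C' := by positivity
      have hqb : ∀ z : ↥cD, Complex.abs (q z) ≤ C' := by
        intro z
        have hqz : q z = F ↑z - F ζ := by
          rw [hqdef]
          simp only [Pi.add_apply, Pi.smul_apply, Pi.one_apply, smul_eq_mul]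
          rw [hFe z, hFζ]; ring
        rw [hqz, ← Complex.norm_eq_abs]
        calc ‖F ↑z - F ζ‖ ≤ ‖F ↑z‖ + ‖F ζ‖ := norm_sub_le _ _
          _ ≤ C + C := add_le_add (hC _ z.2) (hC _ hζD)
          _ ≤ C' := by rw [hC'def]; linarith
      set K := cD ∩ {x : ℂ | δ ≤ dist x ζ} with hKdef
      have hKc : IsCompact K := (isCompact_closedBall (0:ℂ) 1).inter_right
        (isClosed_le continuous_const (by fun_prop))
      have hHcont : Continuous Hc := by rw [hHcdef]; fun_prop
      have hHlt : ∀ x ∈ K, Complex.abs (Hc x) < 1 := by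
        rintro x ⟨hx1, hx2⟩
        set w := (starRingEnd ℂ) ζ * x with hwdef
        have hw1 : Complex.abs w ≤ 1 := by
          rw [hwdef, map_mul, Complex.abs_conj, heq, one_mul]; exact mem_cD_iff.1 hx1
        have hwre : w.re ≤ 1 := le_trans (Complex.re_le_norm w) hw1
        have hwns : normSq w ≤ 1 := by
          rw [← Complex.sq_abs]; nlinarith [Complex.abs.nonneg w]
        have hne1 : w ≠ 1 := by
          intro hw1'
          have hxζ : x = ζ := by
            have h0 : ζ * ((starRingEnd ℂ) ζ * x) = ζ * 1 := by rw [← hwdef, hw1']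
            have h1 : ((starRingEnd ℂ) ζ * ζ) * x = ζ := by linear_combination h0
            rw [hζζ, one_mul] at h1
            exact h1
          rw [hxζ] at hx2
          simp only [mem_setOf_eq, dist_self] at hx2
          linarith
        have hlt2 : Complex.abs (1 + w) < 2 := by
          by_contra hcon
          push_neg at hcon
          have h4 : (4:ℝ) ≤ normSq (1 + w) := by
            have hsq := Complex.sq_abs (1 + w)
            nlinarith
          have hexp : normSq (1 + w) = 1 + 2 * w.re + normSq w := by
            simp only [Complex.normSq_apply, Complex.add_re, Complex.add_im,
              Complex.one_re, Complex.one_im]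
            ring
          have hre1 : w.re = 1 := by nlinarith
          have hns1 : normSq w = 1 := by nlinarith
          have him : w.im = 0 := by
            rw [Complex.normSq_apply] at hns1
            nlinarith
          exact hne1 (Complex.ext (by simp [hre1]) (by simp [him]))
        have : Complex.abs (Hc x) = Complex.abs (1 + w) / 2 := by
          rw [hHcdef]
          simp only [map_div₀, Complex.abs_two, hwdef]
        rw [this]
        linarith
      obtain ⟨r, hr0, hr1, hrK⟩ : ∃ r : ℝ, 0 ≤ r ∧ r < 1 ∧ ∀ x ∈ K, Complex.abs (Hc x) ≤ r := by
        rcases K.eq_empty_or_nonempty with hKe | hKne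
        · exact ⟨0, le_refl 0, by norm_num, by
            rw [hKe]; intro x hx; exact absurd hx (notMem_empty x)⟩
        · obtain ⟨x₀, hx₀, hmax⟩ :=
            hKc.exists_isMaxOn hKne ((Complex.continuous_abs.comp hHcont).continuousOn)
          exact ⟨Complex.abs (Hc x₀), Complex.abs.nonneg _, hHlt x₀ hx₀, fun x hx => hmax hx⟩
      obtain ⟨n, hn⟩ : ∃ n : ℕ, r ^ n * C' ≤ ε := by
        have ht := tendsto_pow_atTop_nhds_zero_of_lt_one hr0 hr1
        have h2 := (ht.eventually (eventually_lt_nhds (by positivity : (0:ℝ) < ε / C'))).exists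
        obtain ⟨n, hn⟩ := h2
        exact ⟨n, le_of_lt ((lt_div_iff₀ hC'0).1 hn)⟩
      obtain ⟨z, hz⟩ := hspec (h ^ n * q) ((hh.pow n).mul hq)
      rw [hχn n] at hz
      rw [← hz]
      have happ : (h ^ n * q) z = (h z) ^ n * q z := by simp
      rw [happ, map_mul, map_pow]
      have hhz : h z = Hc ↑z := by rw [habs z, hHcdef]
      rcases lt_or_ge (dist (↑z : ℂ) ζ) δ with hcase | hcase
      · have h1 : Complex.abs (q z) ≤ ε := by
          have hqz : q z = F ↑z - F ζ := by
            rw [hqdef]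
            simp only [Pi.add_apply, Pi.smul_apply, Pi.one_apply, smul_eq_mul]
            rw [hFe z, hFζ]; ring
          have hd := hδF z.2 hcase
          rw [Complex.dist_eq] at hd
          rw [hqz]
          exact le_of_lt hd
        calc Complex.abs (h z) ^ n * Complex.abs (q z) ≤ 1 ^ n * ε := by
              apply mul_le_mul _ h1 (Complex.abs.nonneg _) (by norm_num)
              apply pow_le_pow_left₀ (Complex.abs.nonneg _)
              rw [hhz]; exact hHle _ z.2
          _ = ε := by norm_num
      · have hzK : (↑z : ℂ) ∈ K := ⟨z.2, hcase⟩
        have h1 : Complex.abs (h z) ≤ r := by rw [hhz]; exact hrK _ hzK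
        calc Complex.abs (h z) ^ n * Complex.abs (q z) ≤ r ^ n * C' := by
              apply mul_le_mul (pow_le_pow_left₀ (Complex.abs.nonneg _) h1 n) (hqb z)
                (Complex.abs.nonneg _) (pow_nonneg hr0 n)
          _ ≤ ε := hn
    have habs0 : Complex.abs (χ f - f z₀) = 0 := by
      by_contra hc
      have hpos : 0 < Complex.abs (χ f - f z₀) :=
        lt_of_le_of_ne (Complex.abs.nonneg _) (Ne.symm hc)
      have := main _ (half_pos hpos)
      linarith
    have := Complex.abs.eq_zero.1 habs0
    linear_combination this

lemma aut_is_mobius {U V : ℂ → ℂ}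
    (hUc : ContinuousOn U cD) (hUd : DifferentiableOn ℂ U (ball 0 1))
    (hVc : ContinuousOn V cD) (hVd : DifferentiableOn ℂ V (ball 0 1))
    (hUm : ∀ x ∈ cD, U x ∈ cD) (hVm : ∀ x ∈ cD, V x ∈ cD)
    (hVU : ∀ x ∈ cD, V (U x) = x) (hUV : ∀ x ∈ cD, U (V x) = x) :
    ∃ a η : ℂ, Complex.abs a < 1 ∧ Complex.abs η = 1 ∧
      ∀ x ∈ cD, U x = η * (a - x) / (1 - (starRingEnd ℂ) a * x) := by
  have h0b : (0:ℂ) ∈ ball (0:ℂ) 1 := mem_ball_self one_pos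
  -- interior points map to interior points
  have hinterior : ∀ (W X : ℂ → ℂ), DifferentiableOn ℂ W (ball 0 1) →
      (∀ x ∈ cD, W x ∈ cD) → (∀ x ∈ cD, X (W x) = x) →
      ∀ x ∈ ball (0:ℂ) 1, W x ∈ ball (0:ℂ) 1 := by
    intro W X hWd hWm hXW x hx
    rw [mem_ball_zero_iff]
    by_contra hcon
    push_neg at hcon
    have hle : ‖W x‖ ≤ 1 := by
      have := hWm x (ball_subset_cD hx)
      rw [mem_cD_iff, ← Complex.norm_eq_abs] at this
      exact this
    have heq1 : ‖W x‖ = 1 := le_antisymm hle hcon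
    have hmax : IsMaxOn (norm ∘ W) (ball 0 1) x := by
      intro y hy
      show ‖W y‖ ≤ ‖W x‖
      rw [heq1]
      have := hWm y (ball_subset_cD hy)
      rw [mem_cD_iff, ← Complex.norm_eq_abs] at this
      exact this
    have hconst := Complex.eqOn_of_isPreconnected_of_isMaxOn_norm
      (convex_ball (0:ℂ) 1).isPreconnected isOpen_ball hWd hx hmax
    have e0 : W 0 = W x := hconst h0b
    have eh : W (1/2 : ℂ) = W x := hconst (by
      rw [mem_ball_zero_iff]
      norm_num)
    have c0 : X (W 0) = 0 := hXW 0 (ball_subset_cD h0b)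
    have ch : X (W (1/2 : ℂ)) = 1/2 := hXW _ (ball_subset_cD (by rw [mem_ball_zero_iff]; norm_num))
    rw [e0] at c0
    rw [eh] at ch
    rw [c0] at ch
    norm_num at ch
  have hUb : ∀ x ∈ ball (0:ℂ) 1, U x ∈ ball (0:ℂ) 1 := hinterior U V hUd hUm hVU
  have hVb : ∀ x ∈ ball (0:ℂ) 1, V x ∈ ball (0:ℂ) 1 := hinterior V U hVd hVm hUV
  -- the Möbius factor
  set a : ℂ := V 0 with hadef
  have hab : a ∈ ball (0:ℂ) 1 := hVb 0 h0b
  have ha : Complex.abs a < 1 := mem_ball_zero_iff.1 hab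
  have hUa : U a = 0 := hUV 0 (ball_subset_cD h0b)
  set m : ℂ → ℂ := fun z => (a - z) / (1 - (starRingEnd ℂ) a * z) with hmdef
  have hm1 : ∀ z : ℂ, m z = 1 * (a - z) / (1 - (starRingEnd ℂ) a * z) := by
    intro z; rw [hmdef]; ring
  have hmlt : ∀ x : ℂ, Complex.abs x < 1 → Complex.abs (m x) < 1 := by
    intro x hx
    rw [hm1]
    exact abs_mob_lt ha (by simp) hx
  have hminv : ∀ x : ℂ, Complex.abs x ≤ 1 → m (m x) = x := by
    intro x hx
    have := mob_inv (η := 1) ha (by simp) hx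
    simpa [hm1, map_one] using this
  have hm0 : m 0 = a := by rw [hmdef]; simp
  have hma : m a = 0 := by rw [hmdef]; simp
  have hmd : DifferentiableOn ℂ m (ball 0 1) := by
    have := mob_diffOn (η := (1:ℂ)) ha
    apply this.congr
    intro x hx
    rw [hm1]
  have hmmaps : MapsTo m (ball (0:ℂ) 1) (ball (0:ℂ) 1) := by
    intro x hx
    rw [mem_ball_zero_iff] at *
    exact hmlt x hx
  have hUmaps : MapsTo U (ball (0:ℂ) 1) (ball (0:ℂ) 1) := fun x hx => hUb x hx
  have hVmaps : MapsTo V (ball (0:ℂ) 1) (ball (0:ℂ) 1) := fun x hx => hVb x hx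
  -- Schwarz setup
  set G : ℂ → ℂ := U ∘ m with hGdef
  have hGd : DifferentiableOn ℂ G (ball 0 1) := hUd.comp hmd hmmaps
  have hG0 : G 0 = 0 := by rw [hGdef]; simp [hm0, hUa]
  have hGmaps : MapsTo G (ball (0:ℂ) 1) (ball (0:ℂ) 1) := hUmaps.comp hmmaps
  have hGmaps' : MapsTo G (ball (0:ℂ) 1) (ball (G 0) 1) := by rwa [hG0]
  have schwarz1 : ∀ z ∈ ball (0:ℂ) 1, Complex.abs (G z) ≤ Complex.abs z := by
    intro z hz
    exact Complex.abs_le_abs_of_mapsTo_ball_self hGd hGmaps hG0 (mem_ball_zero_iff.1 hz)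
  set G2 : ℂ → ℂ := m ∘ V with hG2def
  have hG2d : DifferentiableOn ℂ G2 (ball 0 1) := hmd.comp hVd hVmaps
  have hG20 : G2 0 = 0 := by rw [hG2def]; simp [← hadef, hma]
  have hG2maps : MapsTo G2 (ball (0:ℂ) 1) (ball (0:ℂ) 1) := hmmaps.comp hVmaps
  have schwarz2 : ∀ z ∈ ball (0:ℂ) 1, Complex.abs (G2 z) ≤ Complex.abs z := by
    intro z hz
    exact Complex.abs_le_abs_of_mapsTo_ball_self hG2d hG2maps hG20 (mem_ball_zero_iff.1 hz)
  have habsG : ∀ z ∈ ball (0:ℂ) 1, Complex.abs (G z) = Complex.abs z := by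
    intro z hz
    refine le_antisymm (schwarz1 z hz) ?_
    have hmz : m z ∈ ball (0:ℂ) 1 := hmmaps hz
    have h1 : V (G z) = m z := hVU (m z) (ball_subset_cD hmz)
    have h2 : G2 (G z) = z := by
      rw [hG2def]
      show m (V (G z)) = z
      rw [h1]
      exact hminv z (le_of_lt (mem_ball_zero_iff.1 hz))
    have := schwarz2 (G z) (hGmaps hz)
    rw [h2] at this
    exact this
  -- the slope function
  set H : ℂ → ℂ := dslope G 0 with hHdef
  have hHd : DifferentiableOn ℂ H (ball 0 1) :=
    (Complex.differentiableOn_dslope (isOpen_ball.mem_nhds h0b)).mpr hGd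
  have hHne : ∀ z ∈ ball (0:ℂ) 1, z ≠ 0 → Complex.abs (H z) = 1 := by
    intro z hz hz0
    rw [hHdef, dslope_of_ne G hz0, slope_def_field]
    rw [hG0, sub_zero, sub_zero, map_div₀]
    rw [habsG z hz]
    exact div_self (by simpa [Complex.abs.eq_zero] using hz0)
  have hH0 : Complex.abs (H 0) = 1 := by
    have hca : ContinuousAt H 0 :=
      (hHd.differentiableAt (isOpen_ball.mem_nhds h0b)).continuousAt
    have t1 : Tendsto (fun z => Complex.abs (H z)) (𝓝[≠] (0:ℂ)) (𝓝 (Complex.abs (H 0))) :=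
      (Complex.continuous_abs.continuousAt.comp hca).tendsto.mono_left nhdsWithin_le_nhds
    have t2 : ∀ᶠ z in 𝓝[≠] (0:ℂ), Complex.abs (H z) = 1 := by
      filter_upwards [mem_nhdsWithin_of_mem_nhds (isOpen_ball.mem_nhds h0b),
        self_mem_nhdsWithin] with z hz1 hz2
      exact hHne z hz1 hz2
    have t3 : Tendsto (fun z => Complex.abs (H z)) (𝓝[≠] (0:ℂ)) (𝓝 1) :=
      Tendsto.congr' (by filter_upwards [t2] with z h; exact h.symm) tendsto_const_nhds
    exact tendsto_nhds_unique t1 t3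
  have hmax : IsMaxOn (norm ∘ H) (ball (0:ℂ) 1) 0 := by
    intro z hz
    show ‖H z‖ ≤ ‖H 0‖
    rw [Complex.norm_eq_abs, Complex.norm_eq_abs, hH0]
    rcases eq_or_ne z 0 with rfl | hz0
    · rw [hH0]
    · rw [hHne z hz hz0]
  have hconst := Complex.eqOn_of_isPreconnected_of_isMaxOn_norm
    (convex_ball (0:ℂ) 1).isPreconnected isOpen_ball hHd h0b hmax
  set η : ℂ := H 0 with hηdef
  have hη : Complex.abs η = 1 := hH0
  have hGz : ∀ z ∈ ball (0:ℂ) 1, G z = η * z := by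
    intro z hz
    have h1 : (z - 0) • H z = G z - G 0 := sub_smul_dslope G 0 z
    rw [hG0, sub_zero, sub_zero, smul_eq_mul] at h1
    rw [← h1, hconst hz]
    show z * η = η * z
    ring
  refine ⟨a, η, ha, hη, ?_⟩
  have hball : ∀ w ∈ ball (0:ℂ) 1, U w = η * (a - w) / (1 - (starRingEnd ℂ) a * w) := by
    intro w hw
    have hmw : m w ∈ ball (0:ℂ) 1 := hmmaps hw
    have h1 : G (m w) = η * m w := hGz (m w) hmw
    have h2 : G (m w) = U w := by
      rw [hGdef]
      show U (m (m w)) = U w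
      rw [hminv w (le_of_lt (mem_ball_zero_iff.1 hw))]
    rw [← h2, h1, hmdef]
    ring
  intro x hx
  exact eqOn_cD_of_eqOn_ball hUc (mob_contOn ha) (fun w hw => hball w hw) hx

end Infra

section Main
open Topology Filter

/-- `T` is an algebra automorphism of the disc algebra `A(𝔻)` iff
`T f = f ∘ φ̂` for the continuous extension `φ̂` of some `φ ∈ Aut(𝔻)`. -/
theorem stmt_0 (T : (↥cD → ℂ) → (↥cD → ℂ)) :
    IsAlgAutOn {f | MemDiscAlg f} T ↔
      ∃ Φ : ℂ → ℂ, IsMobius Φ ∧ ∃ φh : ↥cD → ↥cD,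
        (∀ z : ↥cD, (↑(φh z) : ℂ) = Φ ↑z) ∧
        ∀ f, MemDiscAlg f → T f = f ∘ φh := by
  constructor
  · rintro ⟨hmem, hadd, hsmul, hmul, hinj, hsurj⟩
    have h1A : MemDiscAlg (1 : ↥cD → ℂ) := memDiscAlg_one
    -- `T` preserves the unit
    have hT1 : T 1 = 1 := by
      obtain ⟨e, heA, heT⟩ := hsurj h1A
      have h2 : T (1 * e) = T 1 * T e := hmul 1 h1A e heA
      rw [one_mul, heT] at h2
      rw [mul_one] at h2
      exact h2.symm
    -- an inverse map `S`
    have hSex : ∀ f, MemDiscAlg f → ∃ g, MemDiscAlg g ∧ T g = f := by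
      intro f hf
      obtain ⟨g, hgA, hgT⟩ := hsurj hf
      exact ⟨g, hgA, hgT⟩
    obtain ⟨S, hS⟩ : ∃ S : (↥cD → ℂ) → (↥cD → ℂ),
        ∀ f, MemDiscAlg f → MemDiscAlg (S f) ∧ T (S f) = f := by
      classical
      refine ⟨fun f => if h : MemDiscAlg f then (hSex f h).choose else f, ?_⟩
      intro f hf
      simp only [dif_pos hf]
      exact (hSex f hf).choose_spec
    have hSuniq : ∀ f g, MemDiscAlg g → T g = f → S f = g := by
      intro f g hg hTg
      have hfA : MemDiscAlg f := hTg ▸ hmem g hg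
      obtain ⟨hSA, hST⟩ := hS f hfA
      exact hinj hSA hg (by rw [hST, hTg])
    have hST' : ∀ f, MemDiscAlg f → S (T f) = f := fun f hf => hSuniq _ f hf rfl
    -- the characters `f ↦ T f w`
    have hTnz : ∀ f, MemDiscAlg f → (∀ z, f z ≠ 0) → ∀ w : ↥cD, T f w ≠ 0 := by
      intro f hf h0 w
      have hfinv : MemDiscAlg (fun z => (f z)⁻¹) := hf.inv h0
      have hone' : f * (fun z => (f z)⁻¹) = 1 := by
        funext z
        simp only [Pi.mul_apply, Pi.one_apply]
        exact mul_inv_cancel₀ (h0 z)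
      have h2 := hmul f hf _ hfinv
      rw [hone', hT1] at h2
      have h3 : (1 : ↥cD → ℂ) w = (T f * T (fun z => (f z)⁻¹)) w := congrFun h2 w
      simp only [Pi.one_apply, Pi.mul_apply] at h3
      intro h0'
      rw [h0', zero_mul] at h3
      exact one_ne_zero h3
    have hcharT : ∀ w : ↥cD, ∃ z₀ : ↥cD, ∀ f, MemDiscAlg f → T f w = f z₀ := by
      intro w
      apply char_eval (fun f => T f w)
      · intro f hf g hg
        rw [hadd f hf g hg]; rfl
      · intro c f hf
        rw [hsmul c f hf]; rfl
      · intro f hf g hg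
        rw [hmul f hf g hg]; rfl
      · rw [hT1]; rfl
      · intro f hf h0
        exact hTnz f hf h0 w
    -- `S` has the same algebraic properties
    have hS1 : S 1 = 1 := hSuniq 1 1 h1A hT1
    have hSadd : ∀ f, MemDiscAlg f → ∀ g, MemDiscAlg g → S (f + g) = S f + S g := by
      intro f hf g hg
      obtain ⟨hA1, hT1'⟩ := hS f hf
      obtain ⟨hA2, hT2'⟩ := hS g hg
      refine hSuniq _ _ (hA1.add hA2) ?_
      rw [hadd _ hA1 _ hA2, hT1', hT2']
    have hSsmul : ∀ (c : ℂ), ∀ f, MemDiscAlg f → S (c • f) = c • S f := by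
      intro c f hf
      obtain ⟨hA1, hT1'⟩ := hS f hf
      refine hSuniq _ _ (hA1.smul c) ?_
      rw [hsmul c _ hA1, hT1']
    have hSmul : ∀ f, MemDiscAlg f → ∀ g, MemDiscAlg g → S (f * g) = S f * S g := by
      intro f hf g hg
      obtain ⟨hA1, hT1'⟩ := hS f hf
      obtain ⟨hA2, hT2'⟩ := hS g hg
      refine hSuniq _ _ (hA1.mul hA2) ?_
      rw [hmul _ hA1 _ hA2, hT1', hT2']
    have hcharS : ∀ w : ↥cD, ∃ z₀ : ↥cD, ∀ f, MemDiscAlg f → S f w = f z₀ := by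
      intro w
      apply char_eval (fun f => S f w)
      · intro f hf g hg
        rw [hSadd f hf g hg]; rfl
      · intro c f hf
        rw [hSsmul c f hf]; rfl
      · intro f hf g hg
        rw [hSmul f hf g hg]; rfl
      · rw [hS1]; rfl
      · intro f hf h0
        have hfinv : MemDiscAlg (fun z => (f z)⁻¹) := hf.inv h0
        have hone' : f * (fun z => (f z)⁻¹) = 1 := by
          funext z
          simp only [Pi.mul_apply, Pi.one_apply]
          exact mul_inv_cancel₀ (h0 z)
        have h2 := hSmul f hf _ hfinv
        rw [hone', hS1] at h2
        have h3 : (1 : ↥cD → ℂ) w = (S f * S (fun z => (f z)⁻¹)) w := congrFun h2 w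
        simp only [Pi.one_apply, Pi.mul_apply] at h3
        intro h0'
        rw [h0', zero_mul] at h3
        exact one_ne_zero h3
    choose φh hφ using hcharT
    choose ψh hψ using hcharS
    have hTf : ∀ f, MemDiscAlg f → T f = f ∘ φh := by
      intro f hf
      funext w
      exact hφ w f hf
    have hψφ : ∀ w, ψh (φh w) = w := by
      intro w
      have e1 : T (S (fun z : ↥cD => (z:ℂ))) w = (fun z : ↥cD => (z:ℂ)) w := by
        rw [(hS _ memDiscAlg_id).2]
      have e2 : T (S (fun z : ↥cD => (z:ℂ))) w
          = (S (fun z : ↥cD => (z:ℂ))) (φh w) := hφ w _ (hS _ memDiscAlg_id).1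
      have e3 : (S (fun z : ↥cD => (z:ℂ))) (φh w)
          = (fun z : ↥cD => (z:ℂ)) (ψh (φh w)) := hψ (φh w) _ memDiscAlg_id
      exact Subtype.ext (((e3.symm.trans e2.symm).trans e1) : _)
    have hφψ : ∀ w, φh (ψh w) = w := by
      intro w
      have hTid : MemDiscAlg (T (fun z : ↥cD => (z:ℂ))) := hmem _ memDiscAlg_id
      have e1 : S (T (fun z : ↥cD => (z:ℂ))) w = (fun z : ↥cD => (z:ℂ)) w := by
        rw [hST' _ memDiscAlg_id]
      have e2 : S (T (fun z : ↥cD => (z:ℂ))) w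
          = (T (fun z : ↥cD => (z:ℂ))) (ψh w) := hψ w _ hTid
      have e3 : (T (fun z : ↥cD => (z:ℂ))) (ψh w)
          = (fun z : ↥cD => (z:ℂ)) (φh (ψh w)) := hφ (ψh w) _ memDiscAlg_id
      exact Subtype.ext (((e3.symm.trans e2.symm).trans e1) : _)
    -- extensions of `T id` and `S id`
    obtain ⟨Uf, hUc, hUd, hUe⟩ := hmem _ memDiscAlg_id
    obtain ⟨Vf, hVc, hVd, hVe⟩ := (hS _ memDiscAlg_id).1
    have hUφ : ∀ z : ↥cD, Uf ↑z = ↑(φh z) := by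
      intro z
      rw [hUe z]
      exact hφ z _ memDiscAlg_id
    have hVψ : ∀ z : ↥cD, Vf ↑z = ↑(ψh z) := by
      intro z
      rw [hVe z]
      exact hψ z _ memDiscAlg_id
    have hUm : ∀ x ∈ cD, Uf x ∈ cD := by
      intro x hx
      rw [show x = ((⟨x, hx⟩ : ↥cD) : ℂ) from rfl, hUφ]
      exact (φh _).2
    have hVm : ∀ x ∈ cD, Vf x ∈ cD := by
      intro x hx
      rw [show x = ((⟨x, hx⟩ : ↥cD) : ℂ) from rfl, hVψ]
      exact (ψh _).2
    have hVU : ∀ x ∈ cD, Vf (Uf x) = x := by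
      intro x hx
      have h1 : Uf x = ↑(φh ⟨x, hx⟩) := hUφ ⟨x, hx⟩
      rw [h1, hVψ (φh ⟨x, hx⟩), hψφ ⟨x, hx⟩]
    have hUV : ∀ x ∈ cD, Uf (Vf x) = x := by
      intro x hx
      have h1 : Vf x = ↑(ψh ⟨x, hx⟩) := hVψ ⟨x, hx⟩
      rw [h1, hUφ (ψh ⟨x, hx⟩), hφψ ⟨x, hx⟩]
    obtain ⟨a, η, ha, hη, hUform⟩ := aut_is_mobius hUc hUd hVc hVd hUm hVm hVU hUV
    refine ⟨fun z => η * (a - z) / (1 - (starRingEnd ℂ) a * z),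
      ⟨a, η, ha, hη, fun z => rfl⟩, φh, ?_, ?_⟩
    · intro z
      rw [← hUφ z]
      exact hUform ↑z z.2
    · exact hTf
  · rintro ⟨Φ, ⟨a, η, ha, hη, hΦ⟩, φh, hφc, hT⟩
    change Complex.abs a < 1 at ha
    change Complex.abs η = 1 at hη
    have hηη : (starRingEnd ℂ) η * η = 1 := by
      rw [mul_comm, Complex.mul_conj]
      norm_cast
      rw [← Complex.sq_abs, hη]; norm_num
    set b : ℂ := η * a with hbdef
    have hb : Complex.abs b < 1 := by
      rw [hbdef, map_mul, hη, one_mul]; exact ha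
    have hηc : Complex.abs ((starRingEnd ℂ) η) = 1 := by
      rw [Complex.abs_conj]; exact hη
    set Ψ : ℂ → ℂ := fun w => (starRingEnd ℂ) η * (b - w) / (1 - (starRingEnd ℂ) b * w)
      with hΨdef
    have hΨΦ : ∀ x ∈ cD, Ψ (Φ x) = x := by
      intro x hx
      rw [hΦ x]
      exact mob_inv ha hη (mem_cD_iff.1 hx)
    have hΦΨ : ∀ x ∈ cD, Φ (Ψ x) = x := by
      intro x hx
      rw [hΦ (Ψ x)]
      have h1 := mob_inv (a := b) (η := (starRingEnd ℂ) η) hb hηc (mem_cD_iff.1 hx)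
      have hcc : (starRingEnd ℂ) ((starRingEnd ℂ) η) = η := Complex.conj_conj η
      have hb2 : (starRingEnd ℂ) η * b = a := by
        rw [hbdef, ← mul_assoc, hηη, one_mul]
      rw [hcc, hb2] at h1
      exact h1
    have hΦcont : ContinuousOn Φ cD := (mob_contOn (η := η) ha).congr fun x _ => hΦ x
    have hΦdiff : DifferentiableOn ℂ Φ (ball 0 1) :=
      (mob_diffOn (η := η) ha).congr fun x _ => hΦ x
    have hΨcont : ContinuousOn Ψ cD := mob_contOn (η := (starRingEnd ℂ) η) hb
    have hΨdiff : DifferentiableOn ℂ Ψ (ball 0 1) := mob_diffOn (η := (starRingEnd ℂ) η) hb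
    have hΦmapsD : MapsTo Φ cD cD := by
      intro x hx
      rw [hΦ x]
      exact mem_cD_iff.2 (abs_mob_le ha hη (mem_cD_iff.1 hx))
    have hΦmapsB : MapsTo Φ (ball 0 1) (ball 0 1) := by
      intro x hx
      rw [mem_ball_zero_iff, Complex.norm_eq_abs] at *
      rw [hΦ x]
      exact abs_mob_lt ha hη hx
    have hΨmapsD : MapsTo Ψ cD cD := by
      intro x hx
      exact mem_cD_iff.2 (abs_mob_le hb hηc (mem_cD_iff.1 hx))
    have hΨmapsB : MapsTo Ψ (ball 0 1) (ball 0 1) := by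
      intro x hx
      rw [mem_ball_zero_iff, Complex.norm_eq_abs] at *
      exact abs_mob_lt hb hηc hx
    set ψh : ↥cD → ↥cD := fun w => ⟨Ψ ↑w, hΨmapsD w.2⟩ with hψhdef
    have hψc : ∀ z : ↥cD, (↑(ψh z) : ℂ) = Ψ ↑z := fun _ => rfl
    have hcompφ : ∀ f, MemDiscAlg f → MemDiscAlg (f ∘ φh) :=
      fun f hf => memDiscAlg_comp hΦcont hΦdiff hΦmapsD hΦmapsB hφc hf
    have hcompψ : ∀ f, MemDiscAlg f → MemDiscAlg (f ∘ ψh) :=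
      fun f hf => memDiscAlg_comp hΨcont hΨdiff hΨmapsD hΨmapsB hψc hf
    have hψφ : ∀ z : ↥cD, ψh (φh z) = z := by
      intro z
      apply Subtype.ext
      rw [hψc (φh z), hφc z]
      exact hΨΦ ↑z z.2
    have hφψ : ∀ z : ↥cD, φh (ψh z) = z := by
      intro z
      apply Subtype.ext
      rw [hφc (ψh z), hψc z]
      exact hΦΨ ↑z z.2
    refine ⟨?_, ?_, ?_, ?_, ?_, ?_⟩
    · intro f hf
      rw [hT f hf]
      exact hcompφ f hf
    · intro f hf g hg
      rw [hT f hf, hT g hg, hT (f + g) (MemDiscAlg.add hf hg)]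
      rfl
    · intro c f hf
      rw [hT f hf, hT (c • f) (MemDiscAlg.smul c hf)]
      rfl
    · intro f hf g hg
      rw [hT f hf, hT g hg, hT (f * g) (MemDiscAlg.mul hf hg)]
      rfl
    · intro f hf g hg hfg
      rw [hT f hf, hT g hg] at hfg
      funext w
      have h1 := congrFun hfg (ψh w)
      simp only [Function.comp_apply, hφψ w] at h1
      exact h1
    · intro f hf
      refine ⟨f ∘ ψh, hcompψ f hf, ?_⟩
      rw [hT _ (hcompψ f hf)]
      funext z
      show f (ψh (φh z)) = f z
      rw [hψφ z]


end Main
end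

section
/- Let 𝒜 = {f ∈ H^∞ : f(0) = 0}. A map T : 𝒜 → 𝒜 is an algebra automorphism (bijective, ℂ-linear and multiplicative) if and only if there exists θ ∈ ℝ such that T f = f ∘ (z ↦ e^{iθ}z) for all f ∈ 𝒜. -/
open Complex Metric Set

local notation "𝔻" => Complex.UnitDisc

/-- The subalgebra `𝒜 = {f ∈ H^∞ : f(0) = 0}`. -/
def calA : Set (𝔻 → ℂ) := {f | MemHinf f ∧ f 0 = 0}

section Stmt1AuxSection
namespace Stmt1Aux

noncomputable section

lemma holOn_add {f g : 𝔻 → ℂ} (hf : HolOn f) (hg : HolOn g) : HolOn (f + g) := by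
  obtain ⟨F, hFd, hFe⟩ := hf; obtain ⟨G, hGd, hGe⟩ := hg
  exact ⟨F + G, hFd.add hGd, fun z => by simp [hFe z, hGe z]⟩

lemma holOn_mul {f g : 𝔻 → ℂ} (hf : HolOn f) (hg : HolOn g) : HolOn (f * g) := by
  obtain ⟨F, hFd, hFe⟩ := hf; obtain ⟨G, hGd, hGe⟩ := hg
  exact ⟨F * G, hFd.mul hGd, fun z => by simp [hFe z, hGe z]⟩

lemma holOn_mul' {f g : 𝔻 → ℂ} (hf : HolOn f) (hg : HolOn g) :
    HolOn (fun z => f z * g z) := holOn_mul hf hg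

lemma holOn_const (c : ℂ) : HolOn (fun _ => c) :=
  ⟨fun _ => c, differentiableOn_const c, fun _ => rfl⟩

lemma holOn_one : HolOn (1 : 𝔻 → ℂ) := holOn_const 1

lemma holOn_smul (c : ℂ) {f : 𝔻 → ℂ} (hf : HolOn f) : HolOn (c • f) := by
  obtain ⟨F, hFd, hFe⟩ := hf
  exact ⟨c • F, hFd.const_smul c, fun z => by simp [hFe z]⟩

lemma holOn_u : HolOn (fun z : 𝔻 => (z : ℂ)) :=
  ⟨id, differentiableOn_id, fun _ => rfl⟩

lemma memHinf_add {f g : 𝔻 → ℂ} (hf : MemHinf f) (hg : MemHinf g) : MemHinf (f + g) := by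
  obtain ⟨hf1, M, hM⟩ := hf; obtain ⟨hg1, N, hN⟩ := hg
  refine ⟨holOn_add hf1 hg1, M + N, fun z => ?_⟩
  calc ‖(f + g) z‖ = ‖f z + g z‖ := rfl
    _ ≤ ‖f z‖ + ‖g z‖ := norm_add_le _ _
    _ ≤ M + N := add_le_add (hM z) (hN z)

lemma memHinf_mul {f g : 𝔻 → ℂ} (hf : MemHinf f) (hg : MemHinf g) : MemHinf (f * g) := by
  obtain ⟨hf1, M, hM⟩ := hf; obtain ⟨hg1, N, hN⟩ := hg
  refine ⟨holOn_mul hf1 hg1, max M 0 * max N 0, fun z => ?_⟩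
  calc ‖(f * g) z‖ = ‖f z‖ * ‖g z‖ := norm_mul _ _
    _ ≤ max M 0 * max N 0 := by
        apply mul_le_mul ((hM z).trans (le_max_left _ _)) ((hN z).trans (le_max_left _ _))
          (norm_nonneg _) (le_max_right _ _)

lemma memHinf_mul' {f g : 𝔻 → ℂ} (hf : MemHinf f) (hg : MemHinf g) :
    MemHinf (fun z => f z * g z) := memHinf_mul hf hg

lemma memHinf_const (c : ℂ) : MemHinf (fun _ => c) :=
  ⟨holOn_const c, ‖c‖, fun _ => le_rfl⟩

lemma memHinf_one : MemHinf (1 : 𝔻 → ℂ) := memHinf_const 1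

lemma memHinf_smul (c : ℂ) {f : 𝔻 → ℂ} (hf : MemHinf f) : MemHinf (c • f) := by
  obtain ⟨hf1, M, hM⟩ := hf
  refine ⟨holOn_smul c hf1, ‖c‖ * M, fun z => ?_⟩
  calc ‖(c • f) z‖ = ‖c‖ * ‖f z‖ := by simp
    _ ≤ ‖c‖ * M := by
        rcases eq_or_ne c 0 with rfl | hc
        · simp
        · exact mul_le_mul_of_nonneg_left (hM z) (norm_nonneg c)

lemma holOn_sub_const (a : ℂ) {f : 𝔻 → ℂ} (hf : HolOn f) : HolOn (fun z => f z - a) := by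
  obtain ⟨F, hFd, hFe⟩ := hf
  exact ⟨fun w => F w - a, hFd.sub_const a, fun z => by simp [hFe z]⟩

lemma memHinf_sub_const (a : ℂ) {f : 𝔻 → ℂ} (hf : MemHinf f) :
    MemHinf (fun z => f z - a) := by
  obtain ⟨hf1, M, hM⟩ := hf
  refine ⟨holOn_sub_const a hf1, M + ‖a‖, fun z => ?_⟩
  calc ‖f z - a‖ ≤ ‖f z‖ + ‖a‖ := norm_sub_le _ _
    _ ≤ M + ‖a‖ := by linarith [hM z]

lemma memHinf_u : MemHinf (fun z : 𝔻 => (z : ℂ)) :=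
  ⟨holOn_u, 1, fun z => le_of_lt z.norm_lt_one⟩

lemma u_mem_calA : (fun z : 𝔻 => (z : ℂ)) ∈ calA :=
  ⟨memHinf_u, Complex.UnitDisc.coe_zero⟩

lemma calA_add {f g : 𝔻 → ℂ} (hf : f ∈ calA) (hg : g ∈ calA) : f + g ∈ calA :=
  ⟨memHinf_add hf.1 hg.1, by simp [Pi.add_apply, hf.2, hg.2]⟩

lemma calA_mul {f g : 𝔻 → ℂ} (hf : f ∈ calA) (hg : g ∈ calA) : f * g ∈ calA :=
  ⟨memHinf_mul hf.1 hg.1, by simp [Pi.mul_apply, hf.2]⟩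

lemma calA_smul (c : ℂ) {f : 𝔻 → ℂ} (hf : f ∈ calA) : c • f ∈ calA :=
  ⟨memHinf_smul c hf.1, by simp [Pi.smul_apply, hf.2]⟩

lemma uMul_mem_calA {g : 𝔻 → ℂ} (hg : MemHinf g) :
    (fun z : 𝔻 => (z : ℂ) * g z) ∈ calA :=
  ⟨memHinf_mul' memHinf_u hg, by simp⟩

/-- Division lemma: if `f ∈ H^∞` vanishes at `w`, then `f = (z - w) g` with `g ∈ H^∞`. -/
lemma divW {f : 𝔻 → ℂ} (hf : MemHinf f) (w : 𝔻) (hfw : f w = 0) :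
    ∃ g : 𝔻 → ℂ, MemHinf g ∧ ∀ z : 𝔻, f z = ((z : ℂ) - (w : ℂ)) * g z := by
  obtain ⟨⟨F, hFd, hFe⟩, M, hM⟩ := hf
  set G : ℂ → ℂ := dslope F ↑w with hG
  have hw1 : (↑w : ℂ) ∈ ball (0:ℂ) 1 := w.2
  have hGd : DifferentiableOn ℂ G (ball 0 1) :=
    (Complex.differentiableOn_dslope (isOpen_ball.mem_nhds hw1)).2 hFd
  have hkey : ∀ z : 𝔻, f z = ((z : ℂ) - (w : ℂ)) * G ↑z := by
    intro z
    rcases eq_or_ne z w with rfl | hz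
    · simp [hfw]
    · have hzc : (↑z : ℂ) ≠ ↑w := fun h => hz (Complex.UnitDisc.coe_injective h)
      have hzw : (↑z : ℂ) - ↑w ≠ 0 := sub_ne_zero.2 hzc
      rw [hG, dslope_of_ne _ hzc, slope_def_field, hFe z, hFe w, hfw, sub_zero,
        mul_comm, div_mul_cancel₀ _ hzw]
  -- bound
  set δ : ℝ := (1 - ‖(w : ℂ)‖) / 2 with hδdef
  have hδ : 0 < δ := by
    have := w.norm_lt_one; simp only [hδdef]; linarith
  have hKsub : closedBall (↑w : ℂ) δ ⊆ ball (0:ℂ) 1 := by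
    intro x hx
    rw [mem_ball_zero_iff]
    have h1 : ‖x - ↑w‖ ≤ δ := by
      rw [← Complex.dist_eq]; exact mem_closedBall.1 hx
    have h2 := w.norm_lt_one
    calc ‖x‖ = ‖x - ↑w + ↑w‖ := by ring_nf
      _ ≤ ‖x - ↑w‖ + ‖(w : ℂ)‖ := norm_add_le _ _
      _ ≤ δ + ‖(w : ℂ)‖ := by linarith
      _ < 1 := by simp only [hδdef]; linarith
  obtain ⟨C, hC⟩ := (isCompact_closedBall (↑w : ℂ) δ).exists_bound_of_continuousOn
    (hGd.continuousOn.mono hKsub)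
  refine ⟨fun z => G ↑z, ⟨⟨G, hGd, fun _ => rfl⟩, max C (max M 0 / δ), fun z => ?_⟩, hkey⟩
  by_cases hzK : (↑z : ℂ) ∈ closedBall (↑w : ℂ) δ
  · exact (hC _ hzK).trans (le_max_left _ _)
  · have hd : δ < dist ((z:ℂ)) (↑w) := lt_of_not_ge (fun h => hzK (mem_closedBall.2 h))
    rw [Complex.dist_eq] at hd
    have hzne : ((z : ℂ) - ↑w) ≠ 0 := by
      intro h; rw [h] at hd; simp at hd; linarith
    have habs : ‖(z:ℂ) - ↑w‖ ≠ 0 := norm_ne_zero_iff.mpr hzne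
    have : ‖G ↑z‖ = ‖f z‖ / ‖(z:ℂ) - ↑w‖ := by
      rw [hkey z, norm_mul, mul_comm, mul_div_assoc,
        div_self habs, mul_one]
    rw [this]
    refine le_trans ?_ (le_max_right C _)
    apply div_le_div₀ (le_max_right M 0) ((hM z).trans (le_max_left _ _)) hδ hd.le
  
/-- Cancellation of `z ·` for functions with holomorphic extension. -/
lemma cancelU {f g : 𝔻 → ℂ} (hf : HolOn f) (hg : HolOn g)
    (h : ∀ z : 𝔻, (z : ℂ) * f z = (z : ℂ) * g z) : ∀ z, f z = g z := by
  intro z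
  rcases eq_or_ne z 0 with rfl | hz
  · -- continuity/derivative argument at the origin
    obtain ⟨F, hFd, hFe⟩ := hf; obtain ⟨G, hGd, hGe⟩ := hg
    have h0 : (0:ℂ) ∈ ball (0:ℂ) 1 := by simp
    have hFat : DifferentiableAt ℂ F 0 := hFd.differentiableAt (isOpen_ball.mem_nhds h0)
    have hGat : DifferentiableAt ℂ G 0 := hGd.differentiableAt (isOpen_ball.mem_nhds h0)
    have hEq : (fun x => x * F x) =ᶠ[nhds (0:ℂ)] fun x => x * G x := by
      filter_upwards [isOpen_ball.mem_nhds h0] with x hx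
      have hx' : ‖x‖ < 1 := mem_ball_zero_iff.1 hx
      have h3 := h (Complex.UnitDisc.mk x hx')
      rw [← hFe, ← hGe] at h3
      exact h3
    have h1 : HasDerivAt (fun x => x * F x) (1 * F 0 + 0 * deriv F 0) 0 :=
      (hasDerivAt_id (0:ℂ)).mul hFat.hasDerivAt
    have h2 : HasDerivAt (fun x => x * G x) (1 * G 0 + 0 * deriv G 0) 0 :=
      (hasDerivAt_id (0:ℂ)).mul hGat.hasDerivAt
    have := (h1.congr_of_eventuallyEq hEq.symm).unique h2
    have hFG : F 0 = G 0 := by simpa using this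
    have hcz : ((0 : 𝔻) : ℂ) = 0 := Complex.UnitDisc.coe_zero
    rw [← hFe 0, ← hGe 0, hcz, hFG]
  · have hzc : (↑z : ℂ) ≠ 0 := by
      intro hc
      exact hz (Complex.UnitDisc.coe_injective (by rw [hc, Complex.UnitDisc.coe_zero]))
    exact mul_left_cancel₀ hzc (h z)

end
end Stmt1Aux

-- temp: concatenated after part1 for testing
section Part2
open Complex Metric Set
namespace Stmt1Aux
noncomputable section


/-- Rotation of the disc. -/
def rot (θ : ℝ) : 𝔻 → 𝔻 := fun z => Complex.UnitDisc.mk (Complex.exp (θ * Complex.I) * ↑z)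
  (by rw [norm_mul, Complex.norm_exp_ofReal_mul_I, one_mul]; exact z.norm_lt_one)

lemma rot_coe (θ : ℝ) (z : 𝔻) : (↑(rot θ z) : ℂ) = Complex.exp (θ * Complex.I) * ↑z := rfl

lemma rot_rot (θ : ℝ) (z : 𝔻) : rot θ (rot (-θ) z) = z := by
  apply Complex.UnitDisc.coe_injective
  rw [rot_coe, rot_coe, ← mul_assoc, ← Complex.exp_add]
  push_cast
  ring_nf
  rw [Complex.exp_zero, one_mul]

lemma rot_rot' (θ : ℝ) (z : 𝔻) : rot (-θ) (rot θ z) = z := by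
  have := rot_rot (-θ) z
  rwa [neg_neg] at this

lemma comp_mem_calA {e : ℂ} (he : ‖e‖ = 1) {φ : 𝔻 → 𝔻}
    (hφ : ∀ z : 𝔻, (↑(φ z) : ℂ) = e * ↑z) {f : 𝔻 → ℂ} (hf : f ∈ calA) :
    f ∘ φ ∈ calA := by
  obtain ⟨⟨⟨F, hFd, hFe⟩, M, hM⟩, hf0⟩ := hf
  have hmaps : MapsTo (fun w : ℂ => e * w) (ball 0 1) (ball 0 1) := by
    intro w hw
    rw [mem_ball_zero_iff] at hw ⊢
    show ‖e * w‖ < 1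
    rw [norm_mul, he, one_mul]
    exact hw
  constructor
  · constructor
    · refine ⟨fun w => F (e * w), ?_, fun z => ?_⟩
      · exact hFd.comp (((differentiable_const e).mul differentiable_id).differentiableOn) hmaps
      · show F (e * ↑z) = f (φ z)
        rw [← hφ z, hFe]
    · exact ⟨M, fun z => hM (φ z)⟩
  · show f (φ 0) = 0
    have : φ 0 = 0 := by
      apply Complex.UnitDisc.coe_injective
      rw [hφ 0, Complex.UnitDisc.coe_zero, mul_zero]
    rw [this, hf0]

lemma reverse_dir (T : (𝔻 → ℂ) → (𝔻 → ℂ)) (θ : ℝ) (φ : 𝔻 → 𝔻)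
    (hφ : ∀ z : 𝔻, (↑(φ z) : ℂ) = Complex.exp (θ * Complex.I) * ↑z)
    (hT : ∀ f ∈ calA, T f = f ∘ φ) : IsAlgAutOn calA T := by
  have he : ‖Complex.exp (θ * Complex.I)‖ = 1 := Complex.norm_exp_ofReal_mul_I θ
  have he' : ‖Complex.exp ((-θ : ℝ) * Complex.I)‖ = 1 :=
    Complex.norm_exp_ofReal_mul_I (-θ)
  have hφrot : φ = rot θ := by
    funext z; exact Complex.UnitDisc.coe_injective (by rw [hφ z, rot_coe])
  have hcompinv : ∀ z : 𝔻, φ (rot (-θ) z) = z := by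
    intro z; rw [hφrot]; exact rot_rot θ z
  have hinvcomp : ∀ z : 𝔻, rot (-θ) (φ z) = z := by
    intro z; rw [hφrot]; exact rot_rot' θ z
  refine ⟨?_, ?_, ?_, ?_, ?_, ?_⟩
  · intro f hf; rw [hT f hf]; exact comp_mem_calA he hφ hf
  · intro f hf g hg
    rw [hT f hf, hT g hg, hT _ (calA_add hf hg)]
    funext z; simp [Function.comp]
  · intro c f hf
    rw [hT f hf, hT _ (calA_smul c hf)]
    funext z; simp [Function.comp]
  · intro f hf g hg
    rw [hT f hf, hT g hg, hT _ (calA_mul hf hg)]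
    funext z; simp [Function.comp]
  · intro f hf g hg hfg
    rw [hT f hf, hT g hg] at hfg
    funext z
    have := congrFun hfg (rot (-θ) z)
    simpa [Function.comp, hcompinv z] using this
  · intro g hg
    refine ⟨g ∘ rot (-θ), comp_mem_calA he' (fun z => rot_coe (-θ) z) hg, ?_⟩
    rw [hT _ (comp_mem_calA he' (fun z => rot_coe (-θ) z) hg)]
    funext z
    simp [Function.comp, hinvcomp z]

end
end Stmt1Aux
end Part2

section Part3
open Complex Metric Set
namespace Stmt1Aux
noncomputable section

/-- Every algebra automorphism of `calA` is a composition operator with an analytic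
self-map of the disc fixing the origin. -/
lemma mainA {T : (𝔻 → ℂ) → (𝔻 → ℂ)} (hT : IsAlgAutOn calA T) :
    ∃ b : 𝔻 → 𝔻, MemHinf (fun z => (b z : ℂ)) ∧ b 0 = 0 ∧
      ∀ f ∈ calA, ∀ z, T f z = f (b z) := by
  classical
  obtain ⟨hmem, hadd, hsmul, hmul, hinj, hsurj⟩ := hT
  set u : 𝔻 → ℂ := fun z => (z : ℂ) with hudef
  have hu : u ∈ calA := u_mem_calA
  set b₁ : 𝔻 → ℂ := T u with hb₁def
  have hb₁ : b₁ ∈ calA := hmem u hu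
  have divU : ∀ f ∈ calA, ∃ g, MemHinf g ∧ ∀ z : 𝔻, f z = (z : ℂ) * g z := by
    intro f hf
    obtain ⟨g, hg, hgz⟩ := divW hf.1 0 hf.2
    exact ⟨g, hg, fun z => by simpa using hgz z⟩
  obtain ⟨g₀, hg₀, hbg₀⟩ := divU b₁ hb₁
  -- the cofactor of `b₁` is invertible in `H^∞`
  obtain ⟨p, hp, hTp⟩ := hsurj hu
  obtain ⟨p₁, hp₁, hpp₁⟩ := divU p hp
  have hkmem : (fun z : 𝔻 => (z : ℂ) * (p₁ z * p₁ z)) ∈ calA :=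
    uMul_mem_calA (memHinf_mul' hp₁ hp₁)
  have hpp : p * p = u * fun z : 𝔻 => (z : ℂ) * (p₁ z * p₁ z) := by
    funext z; simp only [Pi.mul_apply, hudef]; rw [hpp₁ z]; ring
  have h2 : T (p * p) = u * u := by rw [hmul p hp p hp, hTp]
  have h1 : T (p * p) = b₁ * T (fun z : 𝔻 => (z : ℂ) * (p₁ z * p₁ z)) := by
    rw [hpp, hmul u hu _ hkmem, hb₁def]
  obtain ⟨c, hc, hTkc⟩ := divU _ (hmem _ hkmem)
  have hinv : ∀ z : 𝔻, g₀ z * c z = 1 := by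
    have step1 : ∀ z : 𝔻, (z : ℂ) * ((z : ℂ) * 1) = (z : ℂ) * ((z : ℂ) * (g₀ z * c z)) := by
      intro z
      have := congrFun (h2.symm.trans h1) z
      simp only [Pi.mul_apply, hudef] at this
      rw [hbg₀ z, hTkc z] at this
      calc (z : ℂ) * ((z : ℂ) * 1) = (z:ℂ) * (z:ℂ) := by ring
        _ = (z:ℂ) * g₀ z * ((z:ℂ) * c z) := this
        _ = (z : ℂ) * ((z : ℂ) * (g₀ z * c z)) := by ring
    have step2 := cancelU (holOn_mul' holOn_u (holOn_const 1))
      (holOn_mul' holOn_u (holOn_mul' hg₀.1 hc.1)) step1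
    have step3 := cancelU (holOn_const 1) (holOn_mul' hg₀.1 hc.1) step2
    intro z; exact (step3 z).symm
  -- the companion endomorphism `S` of `H^∞`
  have hdivT : ∀ g : 𝔻 → ℂ, MemHinf g → ∃ q, MemHinf q ∧ ∀ z, T (u * g) z = (z : ℂ) * q z := by
    intro g hg
    exact divU (T (u * g)) (hmem _ (uMul_mem_calA hg))
  choose q hq1 hq2 using hdivT
  set S : (𝔻 → ℂ) → (𝔻 → ℂ) :=
    fun g => if hg : MemHinf g then (fun z => c z * q g hg z) else 0 with hSdef
  have hSg : ∀ g (hg : MemHinf g), S g = fun z => c z * q g hg z := by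
    intro g hg; simp only [hSdef]; rw [dif_pos hg]
  have hS_hinf : ∀ g (hg : MemHinf g), MemHinf (S g) := by
    intro g hg; rw [hSg g hg]; exact memHinf_mul' hc (hq1 g hg)
  have hS_eq : ∀ g (hg : MemHinf g), ∀ z, T (u * g) z = b₁ z * S g z := by
    intro g hg z
    rw [hSg g hg, hq2 g hg, hbg₀ z]
    have := hinv z
    calc (z:ℂ) * q g hg z = (g₀ z * c z) * ((z:ℂ) * q g hg z) := by rw [this]; ring
      _ = (z:ℂ) * g₀ z * (c z * q g hg z) := by ring
  have cancelB : ∀ X Y : 𝔻 → ℂ, HolOn X → HolOn Y →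
      (∀ z, b₁ z * X z = b₁ z * Y z) → ∀ z, X z = Y z := by
    intro X Y hX hY hXY
    have h' : ∀ z : 𝔻, (z:ℂ) * (g₀ z * X z) = (z:ℂ) * (g₀ z * Y z) := by
      intro z
      have := hXY z; rw [hbg₀ z] at this
      calc (z:ℂ) * (g₀ z * X z) = (z:ℂ) * g₀ z * X z := by ring
        _ = (z:ℂ) * g₀ z * Y z := this
        _ = (z:ℂ) * (g₀ z * Y z) := by ring
    have h'' := cancelU (holOn_mul' hg₀.1 hX) (holOn_mul' hg₀.1 hY) h'
    intro z
    calc X z = (g₀ z * c z) * X z := by rw [hinv z]; ring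
      _ = c z * (g₀ z * X z) := by ring
      _ = c z * (g₀ z * Y z) := by rw [h'' z]
      _ = (g₀ z * c z) * Y z := by ring
      _ = Y z := by rw [hinv z]; ring
  -- basic properties of S
  have hS1 : ∀ z, S 1 z = 1 := by
    have h' : ∀ z, b₁ z * (1 : ℂ) = b₁ z * S 1 z := by
      intro z
      have := hS_eq 1 memHinf_one z
      rw [mul_one u] at this
      rw [mul_one, ← this, hb₁def]
    exact fun z => (cancelB (fun _ => 1) (S 1) (holOn_const 1)
      (hS_hinf 1 memHinf_one).1 h' z).symm
  have hSu : ∀ z, S u z = b₁ z := by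
    have h' : ∀ z, b₁ z * S u z = b₁ z * b₁ z := by
      intro z
      have h1' := hS_eq u memHinf_u z
      have h2' := congrFun (hmul u hu u hu) z
      simp only [Pi.mul_apply] at h2'
      rw [← hb₁def] at h2'
      rw [← h1', h2']
    exact cancelB (S u) b₁ (hS_hinf u memHinf_u).1 hb₁.1.1 h'
  have hSadd : ∀ g h' (hg : MemHinf g) (hh : MemHinf h'), ∀ z,
      S (g + h') z = S g z + S h' z := by
    intro g h' hg hh
    have hgh : MemHinf (g + h') := memHinf_add hg hh
    have hdist : u * (g + h') = u * g + u * h' := mul_add u g h'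
    have h1' : ∀ z, b₁ z * S (g + h') z = b₁ z * (S g z + S h' z) := by
      intro z
      have e1 := hS_eq (g + h') hgh z
      rw [hdist] at e1
      have e2 := congrFun (hadd (u * g) (uMul_mem_calA hg) (u * h') (uMul_mem_calA hh)) z
      simp only [Pi.add_apply] at e2
      rw [e2, hS_eq g hg z, hS_eq h' hh z] at e1
      rw [← e1]; ring
    exact cancelB _ _ (hS_hinf _ hgh).1
      (holOn_add (hS_hinf g hg).1 (hS_hinf h' hh).1) h1'
  have hSsmul : ∀ (a : ℂ) g (hg : MemHinf g), ∀ z, S (a • g) z = a * S g z := by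
    intro a g hg
    have hag : MemHinf (a • g) := memHinf_smul a hg
    have hdist : u * (a • g) = a • (u * g) := by
      funext z; simp only [Pi.mul_apply, Pi.smul_apply, smul_eq_mul]; ring
    have h1' : ∀ z, b₁ z * S (a • g) z = b₁ z * (a * S g z) := by
      intro z
      have e1 := hS_eq (a • g) hag z
      rw [hdist] at e1
      have e2 := congrFun (hsmul a (u * g) (uMul_mem_calA hg)) z
      simp only [Pi.smul_apply, smul_eq_mul] at e2
      rw [e2, hS_eq g hg z] at e1
      rw [← e1]; ring
    exact cancelB _ _ (hS_hinf _ hag).1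
      (holOn_mul' (holOn_const a) (hS_hinf g hg).1) h1'
  have hSuMul : ∀ k (hk : MemHinf k), ∀ z, S (u * k) z = b₁ z * S k z := by
    intro k hk
    have huk : MemHinf (u * k) := memHinf_mul memHinf_u hk
    have h1' : ∀ z, b₁ z * S (u * k) z = b₁ z * (b₁ z * S k z) := by
      intro z
      have e1 := hS_eq (u * k) huk z
      have e2 := congrFun (hmul u hu (u * k) (uMul_mem_calA hk)) z
      simp only [Pi.mul_apply] at e2
      rw [e2, ← hb₁def, hS_eq k hk z] at e1
      rw [← e1]
    exact cancelB _ _ (hS_hinf _ huk).1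
      (holOn_mul' hb₁.1.1 (hS_hinf k hk).1) h1'
  have hSmulmul : ∀ g h' (hg : MemHinf g) (hh : MemHinf h'), ∀ z,
      S (g * h') z = S g z * S h' z := by
    intro g h' hg hh
    have hgh : MemHinf (g * h') := memHinf_mul hg hh
    have hid : u * (u * (g * h')) = (u * g) * (u * h') := by
      funext z; simp only [Pi.mul_apply]; ring
    have h1' : ∀ z, b₁ z * (b₁ z * S (g * h') z) = b₁ z * (b₁ z * (S g z * S h' z)) := by
      intro z
      have e1 := hS_eq (u * (g * h')) (memHinf_mul memHinf_u hgh) z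
      rw [hid] at e1
      have e2 := congrFun (hmul (u * g) (uMul_mem_calA hg) (u * h') (uMul_mem_calA hh)) z
      simp only [Pi.mul_apply] at e2
      rw [e2, hS_eq g hg z, hS_eq h' hh z, hSuMul (g * h') hgh z] at e1
      rw [← e1]; ring
    have h2' := cancelB _ _
      (holOn_mul' hb₁.1.1 (hS_hinf _ hgh).1)
      (holOn_mul' hb₁.1.1 (holOn_mul' (hS_hinf g hg).1 (hS_hinf h' hh).1)) h1'
    exact cancelB _ _ (hS_hinf _ hgh).1
      (holOn_mul' (hS_hinf g hg).1 (hS_hinf h' hh).1) h2'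
  -- linear decomposition of affine functions
  have hSaffine : ∀ (a : ℂ), ∀ z, S (fun w : 𝔻 => (w : ℂ) - a) z = b₁ z - a := by
    intro a z
    have hdecomp : (fun w : 𝔻 => (w : ℂ) - a) = u + (-a) • (1 : 𝔻 → ℂ) := by
      funext w; simp [hudef]; ring
    rw [hdecomp]
    rw [hSadd u ((-a) • (1:𝔻 → ℂ)) memHinf_u (memHinf_smul _ memHinf_one) z,
      hSu z, hSsmul (-a) 1 memHinf_one z, hS1 z]
    ring
  -- `b₁` maps into the closed disc
  have hb_le : ∀ z : 𝔻, ‖b₁ z‖ ≤ 1 := by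
    by_contra hcon
    push_neg at hcon
    obtain ⟨z₀, hz₀⟩ := hcon
    set lam : ℂ := b₁ z₀ with hlam
    have hden : ∀ z : 𝔻, (z : ℂ) - lam ≠ 0 := by
      intro z h
      have : (z : ℂ) = lam := by linear_combination h
      rw [← this] at hz₀
      exact absurd (z.norm_lt_one) (by linarith)
    set k : 𝔻 → ℂ := fun z => ((z : ℂ) - lam)⁻¹ with hkdef
    have hkhinf : MemHinf k := by
      constructor
      · refine ⟨fun w => (w - lam)⁻¹, DifferentiableOn.inv
          (differentiableOn_id.sub_const lam) ?_, fun z => rfl⟩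
        intro w hw h
        have : w = lam := by linear_combination h
        rw [mem_ball_zero_iff, this] at hw
        linarith
      · refine ⟨(‖lam‖ - 1)⁻¹, fun z => ?_⟩
        have h1' : ‖lam‖ - 1 ≤ ‖(z:ℂ) - lam‖ := by
          have := norm_add_le ((z:ℂ) - lam) (lam - (z:ℂ) + (z:ℂ))
          have h2' : ‖lam‖ ≤ ‖(z:ℂ) - lam‖ + ‖(z : ℂ)‖ := by
            calc ‖lam‖ = ‖((z:ℂ) - lam) * (-1) + (z:ℂ)‖ := by ring_nf
              _ ≤ ‖((z:ℂ) - lam) * (-1)‖ + ‖(z : ℂ)‖ :=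
                  norm_add_le _ _
              _ = ‖(z:ℂ) - lam‖ + ‖(z : ℂ)‖ := by
                  rw [norm_mul]; simp
          linarith [z.norm_lt_one]
        show ‖((z:ℂ) - lam)⁻¹‖ ≤ (‖lam‖ - 1)⁻¹
        rw [norm_inv]
        apply inv_anti₀ (by linarith) h1'
    set gneg : 𝔻 → ℂ := fun z => (z : ℂ) - lam with hgdef
    have hghinf : MemHinf gneg := memHinf_sub_const lam memHinf_u
    have hgk1 : gneg * k = 1 := by
      funext z
      simp only [Pi.mul_apply, Pi.one_apply, hgdef, hkdef]
      exact mul_inv_cancel₀ (hden z)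
    have := hSmulmul gneg k hghinf hkhinf z₀
    rw [hgk1, hS1 z₀] at this
    rw [hSaffine lam z₀] at this
    rw [← hlam, sub_self, zero_mul] at this
    exact one_ne_zero this
  -- `b₁` maps into the open disc
  have hb_lt : ∀ z : 𝔻, ‖b₁ z‖ < 1 := by
    intro z₀
    rcases lt_or_eq_of_le (hb_le z₀) with h | h
    · exact h
    · exfalso
      obtain ⟨Fb, hFbd, hFbe⟩ := hb₁.1.1
      have hmax : IsMaxOn (norm ∘ Fb) (ball (0:ℂ) 1) ↑z₀ := by
        intro x hx
        have hx' : ‖x‖ < 1 := mem_ball_zero_iff.1 hx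
        show ‖Fb x‖ ≤ ‖Fb ↑z₀‖
        rw [hFbe z₀]
        rw [show Fb x = b₁ (Complex.UnitDisc.mk x hx') from hFbe (Complex.UnitDisc.mk x hx')]
        show ‖_‖ ≤ ‖_‖
        exact (hb_le _).trans h.ge
      have heq := Complex.eqOn_of_isPreconnected_of_isMaxOn_norm
        (convex_ball (0:ℂ) 1).isPreconnected isOpen_ball hFbd z₀.2 hmax
      have h0mem : (0:ℂ) ∈ ball (0:ℂ) 1 := by simp
      have h0 : Fb 0 = Fb ↑z₀ := heq h0mem
      have hFb0 : Fb 0 = 0 := by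
        have := hFbe 0
        rw [Complex.UnitDisc.coe_zero] at this
        rw [this, hb₁.2]
      rw [hFb0] at h0
      rw [hFbe z₀] at h0
      rw [← h0] at h
      simp at h
  set bD : 𝔻 → 𝔻 := fun z => Complex.UnitDisc.mk (b₁ z) (hb_lt z) with hbDdef
  have hbDcoe : ∀ z, (↑(bD z) : ℂ) = b₁ z := fun z => rfl
  -- the character identity
  have hchar : ∀ g (hg : MemHinf g), ∀ z₀, S g z₀ = g (bD z₀) := by
    intro g hg z₀
    set w : 𝔻 := bD z₀ with hwdef
    have hg' : MemHinf (fun z => g z - g w) := memHinf_sub_const (g w) hg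
    have hg'w : (fun z => g z - g w) w = 0 := sub_self _
    obtain ⟨k, hk, hkeq⟩ := divW hg' w hg'w
    have hdecomp : g = (fun z : 𝔻 => ((z:ℂ) - (w:ℂ)) * k z) + (g w) • (1 : 𝔻 → ℂ) := by
      funext z
      simp only [Pi.add_apply, Pi.smul_apply, Pi.one_apply, smul_eq_mul, mul_one]
      rw [← hkeq z]; ring
    have hfirst : MemHinf (fun z : 𝔻 => ((z:ℂ) - (w:ℂ)) * k z) :=
      memHinf_mul' (memHinf_sub_const _ memHinf_u) hk
    have e1 : S g z₀ = S (fun z : 𝔻 => ((z:ℂ) - (w:ℂ)) * k z) z₀ + g w := by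
      conv_lhs => rw [hdecomp]
      rw [hSadd _ _ hfirst (memHinf_smul _ memHinf_one) z₀,
        hSsmul (g w) 1 memHinf_one z₀, hS1 z₀, mul_one]
    have hprod : (fun z : 𝔻 => ((z:ℂ) - (w:ℂ)) * k z)
        = (fun z : 𝔻 => (z:ℂ) - (w:ℂ)) * k := by
      funext z; simp [Pi.mul_apply]
    have e2 : S (fun z : 𝔻 => ((z:ℂ) - (w:ℂ)) * k z) z₀ = 0 := by
      rw [hprod, hSmulmul _ k (memHinf_sub_const _ memHinf_u) hk z₀,
        hSaffine (↑w) z₀]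
      rw [hwdef, hbDcoe z₀] at *
      simp
    rw [e1, e2, zero_add]
  -- conclusion
  refine ⟨bD, hb₁.1, ?_, ?_⟩
  · apply Complex.UnitDisc.coe_injective
    rw [hbDcoe 0, hb₁.2, Complex.UnitDisc.coe_zero]
  · intro f hf z
    obtain ⟨g, hg, hfg⟩ := divU f hf
    have hfeq : f = u * g := by funext z'; rw [Pi.mul_apply]; exact hfg z'
    calc T f z = T (u * g) z := by rw [hfeq]
      _ = b₁ z * S g z := hS_eq g hg z
      _ = b₁ z * g (bD z) := by rw [hchar g hg z]
      _ = ↑(bD z) * g (bD z) := rfl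
      _ = f (bD z) := (hfg (bD z)).symm

end
end Stmt1Aux
end Part3

section Part4
open Complex Metric Set
namespace Stmt1Aux
noncomputable section

lemma inv_aut {T : (𝔻 → ℂ) → (𝔻 → ℂ)} (hT : IsAlgAutOn calA T) :
    ∃ T' : (𝔻 → ℂ) → (𝔻 → ℂ), IsAlgAutOn calA T' ∧
      (∀ f ∈ calA, T' (T f) = f) ∧ (∀ f ∈ calA, T (T' f) = f) := by
  classical
  obtain ⟨hmem, hadd, hsmul, hmul, hinj, hsurj⟩ := hT
  have hex : ∀ f : 𝔻 → ℂ, f ∈ calA → ∃ g, g ∈ calA ∧ T g = f := by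
    intro f hf
    obtain ⟨g, hg, hTg⟩ := hsurj hf
    exact ⟨g, hg, hTg⟩
  choose W hW1 hW2 using hex
  set T' : (𝔻 → ℂ) → (𝔻 → ℂ) := fun f => if hf : f ∈ calA then W f hf else f with hT'def
  have hT'eq : ∀ f (hf : f ∈ calA), T' f = W f hf := by
    intro f hf; simp only [hT'def]; rw [dif_pos hf]
  have hT'mem : ∀ f ∈ calA, T' f ∈ calA := by
    intro f hf; rw [hT'eq f hf]; exact hW1 f hf
  have hright : ∀ f ∈ calA, T (T' f) = f := by
    intro f hf; rw [hT'eq f hf]; exact hW2 f hf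
  have hleft : ∀ f ∈ calA, T' (T f) = f := by
    intro f hf
    apply hinj (hT'mem (T f) (hmem f hf)) hf
    rw [hright (T f) (hmem f hf)]
  refine ⟨T', ⟨hT'mem, ?_, ?_, ?_, ?_, ?_⟩, hleft, hright⟩
  · intro f hf g hg
    apply hinj (hT'mem (f + g) (calA_add hf hg))
      (calA_add (hT'mem f hf) (hT'mem g hg))
    rw [hright _ (calA_add hf hg), hadd (T' f) (hT'mem f hf) (T' g) (hT'mem g hg),
      hright f hf, hright g hg]
  · intro a f hf
    apply hinj (hT'mem (a • f) (calA_smul a hf)) (calA_smul a (hT'mem f hf))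
    rw [hright _ (calA_smul a hf), hsmul a (T' f) (hT'mem f hf), hright f hf]
  · intro f hf g hg
    apply hinj (hT'mem (f * g) (calA_mul hf hg))
      (calA_mul (hT'mem f hf) (hT'mem g hg))
    rw [hright _ (calA_mul hf hg), hmul (T' f) (hT'mem f hf) (T' g) (hT'mem g hg),
      hright f hf, hright g hg]
  · intro f hf g hg hT'fg
    rw [← hright f hf, ← hright g hg, hT'fg]
  · intro f hf
    exact ⟨T f, hmem f hf, hleft f hf⟩

lemma extension_props {b : 𝔻 → 𝔻} (hbH : HolOn (fun z => (b z : ℂ))) (hb0 : b 0 = 0) :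
    ∃ F : ℂ → ℂ, DifferentiableOn ℂ F (ball 0 1) ∧ (∀ z : 𝔻, F ↑z = ↑(b z)) ∧ F 0 = 0 ∧
      MapsTo F (ball 0 1) (ball (F 0) 1) := by
  obtain ⟨F, hFd, hFe⟩ := hbH
  have hF0 : F 0 = 0 := by
    have h := hFe 0
    rw [Complex.UnitDisc.coe_zero] at h
    rw [h]
    show (↑(b 0) : ℂ) = 0
    rw [hb0, Complex.UnitDisc.coe_zero]
  refine ⟨F, hFd, hFe, hF0, ?_⟩
  intro x hx
  rw [hF0, mem_ball_zero_iff]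
  have hx' : ‖x‖ < 1 := by rwa [mem_ball_zero_iff] at hx
  rw [show F x = ↑(b (Complex.UnitDisc.mk x hx')) from hFe (Complex.UnitDisc.mk x hx')]
  exact (b (Complex.UnitDisc.mk x hx')).norm_lt_one

lemma schwarz_le {b : 𝔻 → 𝔻} (hbH : HolOn (fun z => (b z : ℂ))) (hb0 : b 0 = 0) :
    ∀ z : 𝔻, ‖((b z) : ℂ)‖ ≤ ‖(z : ℂ)‖ := by
  obtain ⟨F, hFd, hFe, hF0, hmaps⟩ := extension_props hbH hb0
  intro z
  rcases eq_or_ne z 0 with rfl | hz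
  · simp [hb0]
  · have hzc : (z : ℂ) ≠ 0 := by
      intro hc
      exact hz (Complex.UnitDisc.coe_injective (by rw [hc, Complex.UnitDisc.coe_zero]))
    have hd := Complex.norm_dslope_le_div_of_mapsTo_ball hFd (hmaps.mono_right ball_subset_closedBall) (mem_ball_zero_iff.2 z.norm_lt_one)
    rw [dslope_of_ne _ hzc, slope_def_field, hF0, sub_zero, sub_zero] at hd
    have : ‖F ↑z‖ / ‖(z : ℂ)‖ ≤ 1 := by
      rw [← norm_div]
      simpa using hd
    rw [← hFe z]
    have hzabs : ‖(z : ℂ)‖ ≠ 0 := norm_ne_zero_iff.mpr hzc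
    calc ‖F ↑z‖ = ‖F ↑z‖ / ‖(z : ℂ)‖ * ‖(z : ℂ)‖ :=
          (div_mul_cancel₀ _ hzabs).symm
      _ ≤ 1 * ‖(z : ℂ)‖ := by
          apply mul_le_mul_of_nonneg_right this (norm_nonneg _)
      _ = ‖(z : ℂ)‖ := one_mul _

lemma rotation_of_abs_eq {b : 𝔻 → 𝔻} (hbH : HolOn (fun z => (b z : ℂ))) (hb0 : b 0 = 0)
    (heq : ∀ z : 𝔻, ‖((b z) : ℂ)‖ = ‖(z : ℂ)‖) :
    ∃ c : ℂ, ‖c‖ = 1 ∧ ∀ z : 𝔻, (↑(b z) : ℂ) = c * ↑z := by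
  obtain ⟨F, hFd, hFe, hF0, hmaps⟩ := extension_props hbH hb0
  set G : ℂ → ℂ := dslope F 0 with hGdef
  have h0b : (0:ℂ) ∈ ball (0:ℂ) 1 := by simp
  have hGd : DifferentiableOn ℂ G (ball 0 1) :=
    (Complex.differentiableOn_dslope (isOpen_ball.mem_nhds h0b)).2 hFd
  have hGle : ∀ x ∈ ball (0:ℂ) 1, ‖G x‖ ≤ 1 := by
    intro x hx
    have := Complex.norm_dslope_le_div_of_mapsTo_ball hFd (hmaps.mono_right ball_subset_closedBall) hx
    simpa using this
  have hGrel : ∀ x : ℂ, x ∈ ball (0:ℂ) 1 → x ≠ 0 → F x = x * G x := by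
    intro x hx hxne
    rw [hGdef, dslope_of_ne _ hxne, slope_def_field, hF0, sub_zero, sub_zero]
    field_simp
  have hGeq1 : ∀ x : ℂ, x ∈ ball (0:ℂ) 1 → x ≠ 0 → ‖G x‖ = 1 := by
    intro x hx hxne
    have hx' : ‖x‖ < 1 := by rwa [mem_ball_zero_iff] at hx
    have h1 : ‖F x‖ = ‖x‖ := by
      rw [show F x = ↑(b (Complex.UnitDisc.mk x hx')) from hFe (Complex.UnitDisc.mk x hx')]
      exact heq (Complex.UnitDisc.mk x hx')
    have h2 := hGrel x hx hxne
    rw [h2, norm_mul] at h1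
    have hxa : ‖x‖ ≠ 0 := norm_ne_zero_iff.mpr hxne
    exact mul_left_cancel₀ hxa (h1.trans (mul_one (‖x‖)).symm)
  have hhalf : (1/2 : ℂ) ∈ ball (0:ℂ) 1 := by
    rw [mem_ball_zero_iff]
    norm_num
  have hhalfne : (1/2 : ℂ) ≠ 0 := by norm_num
  have hmax : IsMaxOn (norm ∘ G) (ball (0:ℂ) 1) (1/2 : ℂ) := by
    intro x hx
    show ‖G x‖ ≤ ‖G (1/2 : ℂ)‖
    rw [hGeq1 _ hhalf hhalfne]
    exact hGle x hx
  have heqOn := Complex.eqOn_of_isPreconnected_of_isMaxOn_norm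
    (convex_ball (0:ℂ) 1).isPreconnected isOpen_ball hGd hhalf hmax
  set c : ℂ := G (1/2 : ℂ) with hcdef
  refine ⟨c, hGeq1 _ hhalf hhalfne, ?_⟩
  intro z
  rcases eq_or_ne z 0 with rfl | hz
  · simp [hb0]
  · have hzc : (z : ℂ) ≠ 0 := by
      intro hc
      exact hz (Complex.UnitDisc.coe_injective (by rw [hc, Complex.UnitDisc.coe_zero]))
    have h1 : F ↑z = ↑z * G ↑z := hGrel _ z.2 hzc
    have h2 : G ↑z = c := heqOn z.2
    rw [← hFe z, h1, h2, mul_comm]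

lemma forward_dir {T : (𝔻 → ℂ) → (𝔻 → ℂ)} (hT : IsAlgAutOn calA T) :
    ∃ θ : ℝ, ∃ φ : 𝔻 → 𝔻,
      (∀ z : 𝔻, (↑(φ z) : ℂ) = Complex.exp (θ * Complex.I) * ↑z) ∧
      ∀ f ∈ calA, T f = f ∘ φ := by
  obtain ⟨T', hT', hleft, hright⟩ := inv_aut hT
  obtain ⟨b, hbH, hb0, hbT⟩ := mainA hT
  obtain ⟨b', hbH', hb0', hbT'⟩ := mainA hT'
  set u : 𝔻 → ℂ := fun z => (z : ℂ) with hudef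
  have hu : u ∈ calA := u_mem_calA
  have hbb' : ∀ z : 𝔻, (↑(b (b' z)) : ℂ) = ↑z := by
    intro z
    have h1 : T' (T u) = u := hleft u hu
    have h2 := congrFun h1 z
    have h3 : T' (T u) z = (T u) (b' z) := hbT' _ (hT.1 u hu) z
    have h4 : (T u) (b' z) = ↑(b (b' z)) := hbT u hu (b' z)
    rw [h3, h4] at h2
    exact h2
  have hb'b : ∀ z : 𝔻, (↑(b' (b z)) : ℂ) = ↑z := by
    intro z
    have h1 : T (T' u) = u := hright u hu
    have h2 := congrFun h1 z
    have h3 : T (T' u) z = (T' u) (b z) := hbT _ (hT'.1 u hu) z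
    have h4 : (T' u) (b z) = ↑(b' (b z)) := hbT' u hu (b z)
    rw [h3, h4] at h2
    exact h2
  have heq : ∀ z : 𝔻, ‖((b z) : ℂ)‖ = ‖(z : ℂ)‖ := by
    intro z
    apply le_antisymm (schwarz_le hbH.1 hb0 z)
    calc ‖(z : ℂ)‖ = ‖((b' (b z)) : ℂ)‖ := by rw [hb'b z]
      _ ≤ ‖((b z) : ℂ)‖ := schwarz_le hbH'.1 hb0' (b z)
  obtain ⟨c, hc1, hc2⟩ := rotation_of_abs_eq hbH.1 hb0 heq
  have hexp : Complex.exp ((c.arg : ℂ) * Complex.I) = c := by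
    have := Complex.norm_mul_exp_arg_mul_I c
    rw [hc1] at this
    simpa using this
  refine ⟨c.arg, b, ?_, ?_⟩
  · intro z
    rw [hc2 z, hexp]
  · intro f hf
    funext z
    exact hbT f hf z

end
end Stmt1Aux
end Part4

end Stmt1AuxSection

/-- `T` is an algebra automorphism of `𝒜 = {f ∈ H^∞ : f(0) = 0}` iff
`T f = f ∘ (z ↦ e^{iθ} z)` for some `θ ∈ ℝ`. -/
theorem stmt_1 (T : (𝔻 → ℂ) → (𝔻 → ℂ)) :
    IsAlgAutOn calA T ↔
      ∃ θ : ℝ, ∃ φ : 𝔻 → 𝔻,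
        (∀ z : 𝔻, (↑(φ z) : ℂ) = Complex.exp (θ * Complex.I) * ↑z) ∧
        ∀ f ∈ calA, T f = f ∘ φ := by
  
  constructor
  · exact fun h => Stmt1Aux.forward_dir h
  · rintro ⟨θ, φ, hφ, hTf⟩
    exact Stmt1Aux.reverse_dir T θ φ hφ hTf
end

section
/- Let ℬ = {f ∈ H^∞ : f′(0) = 0}. A map T : ℬ → ℬ is an algebra automorphism (bijective, ℂ-linear and multiplicative) if and only if there exists θ ∈ ℝ such that T f = f ∘ (z ↦ e^{iθ}z) for all f ∈ ℬ. -/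
open Complex Metric Set

local notation "𝔻" => Complex.UnitDisc

/-- The subalgebra `ℬ = {f ∈ H^∞ : f'(0) = 0}`. -/
def calB : Set (𝔻 → ℂ) :=
  {f | MemHinf f ∧ ∃ F : ℂ → ℂ, DifferentiableOn ℂ F (Metric.ball 0 1) ∧
    (∀ z : 𝔻, F ↑z = f z) ∧ deriv F 0 = 0}

namespace Stmt2Aux

local notation "𝔹" => Metric.ball (0:ℂ) 1

lemma coe_mem_ball (z : 𝔻) : (z : ℂ) ∈ 𝔹 := by
  simpa [Metric.mem_ball, dist_zero_right] using z.norm_lt_one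

lemma ball_mem_nhds_coe (z : 𝔻) : 𝔹 ∈ nhds (z : ℂ) :=
  Metric.isOpen_ball.mem_nhds (coe_mem_ball z)

lemma abs_lt_one_of_mem {w : ℂ} (hw : w ∈ 𝔹) : ‖w‖ < 1 := by
  simpa [Metric.mem_ball, dist_zero_right] using hw

lemma coe_mk_mem {w : ℂ} (hw : w ∈ 𝔹) :
    (↑(Complex.UnitDisc.mk w (abs_lt_one_of_mem hw)) : ℂ) = w :=
  Complex.UnitDisc.coe_mk _ _

/-- A good extension of `f : 𝔻 → ℂ`. -/
def GoodExt (f : 𝔻 → ℂ) (F : ℂ → ℂ) (M : ℝ) : Prop :=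
  DifferentiableOn ℂ F 𝔹 ∧ (∀ z : 𝔻, F ↑z = f z) ∧ deriv F 0 = 0 ∧
    ∀ w ∈ 𝔹, ‖F w‖ ≤ M

lemma mem_calB_iff {f : 𝔻 → ℂ} : f ∈ calB ↔ ∃ F M, GoodExt f F M := by
  constructor
  · rintro ⟨⟨⟨F₁, hd₁, he₁⟩, M, hM⟩, F₂, hd₂, he₂, hder⟩
    refine ⟨F₂, M, hd₂, he₂, hder, fun w hw => ?_⟩
    rw [show w = ↑(Complex.UnitDisc.mk w (abs_lt_one_of_mem hw)) from (coe_mk_mem hw).symm,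
      he₂]
    exact hM _
  · rintro ⟨F, M, hd, he, hder, hb⟩
    exact ⟨⟨⟨F, hd, he⟩, M, fun z => by rw [← he]; exact hb _ (coe_mem_ball z)⟩,
      F, hd, he, hder⟩

lemma GoodExt.nonneg {f F M} (h : GoodExt f F M) : 0 ≤ M :=
  le_trans (norm_nonneg _) (h.2.2.2 _ (coe_mem_ball 0))

/-- Two extensions agree on the ball. -/
lemma ext_eqOn {f : 𝔻 → ℂ} {F G : ℂ → ℂ} (hF : ∀ z : 𝔻, F ↑z = f z)
    (hG : ∀ z : 𝔻, G ↑z = f z) : Set.EqOn F G 𝔹 := by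
  intro w hw
  rw [show w = ↑(Complex.UnitDisc.mk w (abs_lt_one_of_mem hw)) from (coe_mk_mem hw).symm,
    hF, hG]

lemma hasDerivAt_zero_of_goodExt {f F M} (h : GoodExt f F M) : HasDerivAt F 0 0 := by
  have := (h.1.differentiableAt (Metric.ball_mem_nhds 0 one_pos)).hasDerivAt
  rwa [h.2.2.1] at this

/-- membership lemmas -/
lemma one_mem_calB : (1 : 𝔻 → ℂ) ∈ calB :=
  mem_calB_iff.mpr ⟨fun _ => 1, 1, differentiableOn_const _, fun _ => rfl, by simp, by simp⟩

lemma const_smul_one_calB (c : ℂ) : (c • (1 : 𝔻 → ℂ)) ∈ calB :=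
  mem_calB_iff.mpr ⟨fun _ => c, ‖c‖, differentiableOn_const _, fun _ => by simp, by simp,
    by simp⟩

lemma add_mem_calB {f g} (hf : f ∈ calB) (hg : g ∈ calB) : f + g ∈ calB := by
  rcases mem_calB_iff.mp hf with ⟨F, M, hFd, hFe, hF0, hFb⟩
  rcases mem_calB_iff.mp hg with ⟨G, N, hGd, hGe, hG0, hGb⟩
  refine mem_calB_iff.mpr ⟨F + G, M + N, hFd.add hGd, fun z => by
      simp [hFe z, hGe z], ?_, fun w hw => ?_⟩
  · have hF := (hasDerivAt_zero_of_goodExt ⟨hFd, hFe, hF0, hFb⟩)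
    have hG := (hasDerivAt_zero_of_goodExt ⟨hGd, hGe, hG0, hGb⟩)
    simpa using (hF.add hG).deriv
  · exact le_trans (norm_add_le _ _) (add_le_add (hFb w hw) (hGb w hw))

lemma smul_mem_calB (c : ℂ) {f} (hf : f ∈ calB) : c • f ∈ calB := by
  rcases mem_calB_iff.mp hf with ⟨F, M, hFd, hFe, hF0, hFb⟩
  refine mem_calB_iff.mpr ⟨c • F, ‖c‖ * M, hFd.const_smul c, fun z => by
      simp [hFe z], ?_, fun w hw => ?_⟩
  · have hF := (hasDerivAt_zero_of_goodExt ⟨hFd, hFe, hF0, hFb⟩).const_smul c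
    rw [show c • (0:ℂ) = 0 from smul_zero c] at hF
    exact hF.deriv
  · simp only [Pi.smul_apply, smul_eq_mul, norm_mul]
    exact mul_le_mul_of_nonneg_left (by simpa using hFb w hw)
      (norm_nonneg c)

lemma mul_mem_calB {f g} (hf : f ∈ calB) (hg : g ∈ calB) : f * g ∈ calB := by
  rcases mem_calB_iff.mp hf with ⟨F, M, hFd, hFe, hF0, hFb⟩
  rcases mem_calB_iff.mp hg with ⟨G, N, hGd, hGe, hG0, hGb⟩
  refine mem_calB_iff.mpr ⟨F * G, M * N, hFd.mul hGd, fun z => by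
      simp [hFe z, hGe z], ?_, fun w hw => ?_⟩
  · have hF := (hasDerivAt_zero_of_goodExt ⟨hFd, hFe, hF0, hFb⟩)
    have hG := (hasDerivAt_zero_of_goodExt ⟨hGd, hGe, hG0, hGb⟩)
    simpa using (hF.mul hG).deriv
  · simp only [Pi.mul_apply, norm_mul]
    exact mul_le_mul (hFb w hw) (hGb w hw) (norm_nonneg _)
      (le_trans (norm_nonneg _) (hFb w hw))

lemma neg_smul_add_mem_calB {f g} (hf : f ∈ calB) (hg : g ∈ calB) (c : ℂ) :
    f + c • g ∈ calB := add_mem_calB hf (smul_mem_calB c hg)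

/-- the functions z ↦ z*z and z ↦ z*z*z -/
noncomputable def q2 : 𝔻 → ℂ := fun z => (z : ℂ) * z
noncomputable def q3 : 𝔻 → ℂ := fun z => (z : ℂ) * z * z

lemma q2_mem_calB : q2 ∈ calB := by
  refine mem_calB_iff.mpr ⟨fun w => w * w, 1, (differentiableOn_id).mul differentiableOn_id,
    fun z => rfl, ?_, fun w hw => ?_⟩
  · have : HasDerivAt (fun w : ℂ => w * w) (0 * 1 + 1 * 0) 0 :=
      ((hasDerivAt_id (0:ℂ)).mul (hasDerivAt_id (0:ℂ))).congr_deriv (by simp)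
    simpa using this.deriv
  · have h := abs_lt_one_of_mem hw
    simp only [norm_mul]
    nlinarith [norm_nonneg w]

lemma q3_mem_calB : q3 ∈ calB := by
  refine mem_calB_iff.mpr ⟨fun w => w * w * w, 1,
    ((differentiableOn_id).mul differentiableOn_id).mul differentiableOn_id,
    fun z => rfl, ?_, fun w hw => ?_⟩
  · have h1 : HasDerivAt (fun w : ℂ => w * w) (0 * 1 + 1 * 0) 0 :=
      ((hasDerivAt_id (0:ℂ)).mul (hasDerivAt_id (0:ℂ))).congr_deriv (by simp)
    have : HasDerivAt (fun w : ℂ => w * w * w) ((0*1+1*0) * 0 + (0*0) * 1) 0 :=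
      (h1.mul (hasDerivAt_id (0:ℂ))).congr_deriv (by simp)
    simpa using this.deriv
  · have h := abs_lt_one_of_mem hw
    simp only [norm_mul]
    nlinarith [norm_nonneg w]

end Stmt2Aux
namespace Stmt2Aux

local notation "𝔹" => Metric.ball (0:ℂ) 1

/-- Division of a bounded analytic function by `z - a` after a zero at `a`. -/
lemma bddDiv {F : ℂ → ℂ} {M : ℝ} {a : ℂ} (hd : DifferentiableOn ℂ F 𝔹)
    (hb : ∀ w ∈ 𝔹, ‖F w‖ ≤ M) (ha : a ∈ 𝔹) (h0 : F a = 0) :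
    DifferentiableOn ℂ (dslope F a) 𝔹 ∧
      (∀ w ∈ 𝔹, ‖dslope F a w‖ ≤ 2 * M / (1 - ‖a‖)) ∧
      (∀ w : ℂ, (w - a) * dslope F a w = F w) := by
  have hnhds : 𝔹 ∈ nhds a := Metric.isOpen_ball.mem_nhds ha
  have hdiff : DifferentiableOn ℂ (dslope F a) 𝔹 := (differentiableOn_dslope hnhds).mpr hd
  have hident : ∀ w : ℂ, (w - a) * dslope F a w = F w := by
    intro w
    have := sub_smul_dslope F a w
    rw [smul_eq_mul] at this
    rw [this, h0, sub_zero]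
  refine ⟨hdiff, fun w hw => ?_, hident⟩
  set aa := ‖a‖ with haa_def
  have haa1 : aa < 1 := abs_lt_one_of_mem ha
  have haa0 : 0 ≤ aa := norm_nonneg a
  set r := max (‖w‖) ((1 + aa)/2) with hr_def
  have hr1 : r < 1 := max_lt (abs_lt_one_of_mem hw) (by linarith)
  have hra : aa < r := lt_of_lt_of_le (by linarith) (le_max_right _ _)
  have hr0 : 0 < r := lt_of_le_of_lt haa0 hra
  have hM0 : 0 ≤ M := le_trans (norm_nonneg _) (hb a ha)
  have key := Complex.norm_le_of_forall_mem_frontier_norm_le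
    (U := Metric.ball (0:ℂ) r) (f := dslope F a) Metric.isBounded_ball
    (DifferentiableOn.diffContOnCl (by
      rw [closure_ball (0:ℂ) hr0.ne']
      exact hdiff.mono (Metric.closedBall_subset_ball hr1)))
    (C := 2 * M / (1 - aa)) ?_ (z := w) ?_
  · exact key
  · intro ζ hζ
    rw [frontier_ball (0:ℂ) hr0.ne'] at hζ
    have hζr : ‖ζ‖ = r := by
      simpa [mem_sphere_iff_norm] using hζ
    have hζball : ζ ∈ 𝔹 := by
      simp only [Metric.mem_ball, dist_zero_right, hζr]
      exact hr1
    have hsub : r - aa ≤ ‖ζ - a‖ := by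
      have := norm_sub_norm_le ζ a
      simpa [hζr] using this
    have h1 : ‖ζ - a‖ * ‖dslope F a ζ‖ = ‖F ζ‖ := by
      rw [show ‖ζ - a‖ = ‖ζ - a‖ from rfl, ← norm_mul, hident ζ]
    have h2 : ‖F ζ‖ ≤ M := hb ζ hζball
    have h3 : (r - aa) * ‖dslope F a ζ‖ ≤ M := by
      refine le_trans ?_ (h1 ▸ h2)
      exact mul_le_mul_of_nonneg_right hsub (norm_nonneg _)
    have h4 : (1 - aa)/2 ≤ r - aa := by
      have : (1 + aa)/2 ≤ r := le_max_right _ _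
      linarith
    have h5 := mul_le_mul_of_nonneg_right h4 (norm_nonneg (dslope F a ζ))
    rw [le_div_iff₀ (by linarith : (0:ℝ) < 1 - aa)]
    nlinarith [norm_nonneg (dslope F a ζ)]
  · rw [closure_ball (0:ℂ) hr0.ne']
    simp only [Metric.mem_closedBall, dist_zero_right]
    exact le_max_left _ _

section Aut

variable {T : (𝔻 → ℂ) → (𝔻 → ℂ)}

lemma T_one (hT : IsAlgAutOn calB T) : T 1 = 1 := by
  obtain ⟨hmap, hadd, hsmul, hmul, hinj, hsurj⟩ := hT
  have h1B : (1 : 𝔻 → ℂ) ∈ calB := one_mem_calB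
  have hu : T 1 = T 1 * T 1 := by
    have := hmul 1 h1B 1 h1B
    rwa [one_mul] at this
  rcases mem_calB_iff.mp (hmap 1 h1B) with ⟨U, M, hUd, hUe, hU0, hUb⟩
  have hUsq : ∀ w ∈ 𝔹, U w = 0 ∨ U w = 1 := by
    intro w hw
    have h := congrFun hu (Complex.UnitDisc.mk w (abs_lt_one_of_mem hw))
    rw [Pi.mul_apply, ← hUe, coe_mk_mem hw] at h
    have h2 : U w * (U w - 1) = 0 := by linear_combination -h
    rcases mul_eq_zero.mp h2 with h' | h'
    · exact Or.inl h'
    · exact Or.inr (by linear_combination h')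
  -- main dichotomy
  by_cases hzero : ∃ w₀ ∈ 𝔹, U w₀ = 0
  · exfalso
    obtain ⟨w₀, hw₀, hU₀⟩ := hzero
    -- U vanishes near w₀
    have hcont : ContinuousAt U w₀ :=
      (hUd.differentiableAt (Metric.isOpen_ball.mem_nhds hw₀)).continuousAt
    have hev0 : U =ᶠ[nhds w₀] (fun _ => (0:ℂ)) := by
      have hsmall : ∀ᶠ w in nhds w₀, ‖U w‖ < 1/2 := by
        have : Filter.Tendsto U (nhds w₀) (nhds 0) := hU₀ ▸ hcont
        have := this.norm
        simp only [norm_zero] at this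
        exact this.eventually_lt_const (by norm_num)
      have hball : ∀ᶠ w in nhds w₀, w ∈ 𝔹 :=
        Metric.isOpen_ball.mem_nhds hw₀
      filter_upwards [hsmall, hball] with w h1 h2
      rcases hUsq w h2 with h | h
      · exact h
      · rw [h] at h1; norm_num at h1
    have heq : Set.EqOn U (fun _ => (0:ℂ)) 𝔹 :=
      AnalyticOnNhd.eqOn_of_preconnected_of_eventuallyEq
        (hUd.analyticOnNhd Metric.isOpen_ball)
        (analyticOnNhd_const)
        (convex_ball (0:ℂ) 1).isPreconnected hw₀ hev0
    have hT10 : T 1 = 0 := by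
      funext z
      have := heq (coe_mem_ball z)
      rw [hUe z] at this
      exact this
    obtain ⟨g, hg, hTg⟩ := hsurj h1B
    have : (1 : 𝔻 → ℂ) = 0 := by
      rw [← hTg]
      have : T (1 * g) = T 1 * T g := hmul 1 h1B g hg
      rw [one_mul] at this
      rw [this, hT10, zero_mul]
    have h01 := congrFun this 0
    simp at h01
  · push_neg at hzero
    funext z
    have h := hUsq ↑z (coe_mem_ball z)
    rcases h with h | h
    · exact absurd h (hzero _ (coe_mem_ball z))
    · rw [← hUe z] at *
      rw [h]; rfl

end Aut

end Stmt2Aux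
namespace Stmt2Aux

local notation "𝔹" => Metric.ball (0:ℂ) 1

section Aut

variable {T : (𝔻 → ℂ) → (𝔻 → ℂ)}

lemma T_const (hT : IsAlgAutOn calB T) (c : ℂ) : T (c • 1) = c • (1 : 𝔻 → ℂ) := by
  rw [hT.2.2.1 c 1 one_mem_calB, T_one hT]

/-- Boundedness of the "characters" `f ↦ T f w`. -/
lemma char_bound (hT : IsAlgAutOn calB T) {f : 𝔻 → ℂ} {F : ℂ → ℂ} {M : ℝ}
    (hf : GoodExt f F M) (w : 𝔻) : ‖T f w‖ ≤ M := by
  obtain ⟨hFd, hFe, hF0, hFb⟩ := hf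
  by_contra hgt
  push_neg at hgt
  set c := T f w with hc
  have hfB : f ∈ calB := mem_calB_iff.mpr ⟨F, M, hFd, hFe, hF0, hFb⟩
  have hne : ∀ ζ ∈ 𝔹, F ζ - c ≠ 0 := by
    intro ζ hζ h
    have : F ζ = c := by linear_combination h
    have h2 := hFb ζ hζ
    rw [this] at h2
    exact absurd h2 (not_le.mpr hgt)
  have hgB : (fun z : 𝔻 => (f z - c)⁻¹) ∈ calB := by
    refine mem_calB_iff.mpr ⟨fun ζ => (F ζ - c)⁻¹, (‖c‖ - M)⁻¹, ?_, ?_, ?_, ?_⟩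
    · exact ((hFd.sub (differentiableOn_const c)).inv hne)
    · intro z; simp only; rw [hFe z]
    · have h0 : HasDerivAt (fun ζ => F ζ - c) 0 0 := by
        simpa using (hasDerivAt_zero_of_goodExt ⟨hFd, hFe, hF0, hFb⟩).sub_const c
      have := h0.inv (hne 0 (Metric.mem_ball_self one_pos))
      rw [show (fun ζ => (F ζ - c)⁻¹) = (fun ζ => F ζ - c)⁻¹ from rfl]
      simpa using this.deriv
    · intro ζ hζ
      have h1 : ‖c‖ - M ≤ ‖F ζ - c‖ := by
        have := norm_sub_norm_le c (F ζ)
        have h2 := hFb ζ hζ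
        rw [norm_sub_rev] at this
        linarith
    
      rw [norm_inv]
      exact inv_anti₀ (by linarith) h1
  have hfcB : f + (-c) • 1 ∈ calB := add_mem_calB hfB (const_smul_one_calB (-c))
  have hprod : (f + (-c) • 1) * (fun z : 𝔻 => (f z - c)⁻¹) = 1 := by
    funext z
    have : f z - c ≠ 0 := by rw [← hFe z]; exact hne _ (coe_mem_ball z)
    simp only [Pi.mul_apply, Pi.add_apply, Pi.smul_apply, Pi.one_apply, smul_eq_mul]
    rw [show f z + -c * 1 = f z - c by ring]
    exact mul_inv_cancel₀ this
  have h1 : (1 : 𝔻 → ℂ) = T (f + (-c) • 1) * T (fun z : 𝔻 => (f z - c)⁻¹) := by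
    rw [← hT.2.2.2.1 _ hfcB _ hgB, hprod, T_one hT]
  have h2 : T (f + (-c) • 1) = T f + (-c) • (1 : 𝔻 → ℂ) := by
    rw [hT.2.1 f hfB _ (const_smul_one_calB (-c)), T_const hT]
  have := congrFun h1 w
  rw [h2] at this
  simp only [Pi.mul_apply, Pi.add_apply, Pi.smul_apply, Pi.one_apply, smul_eq_mul,
    Pi.one_apply] at this
  rw [← hc] at this
  have hz : c + -c * 1 = 0 := by ring
  rw [hz, zero_mul] at this
  exact one_ne_zero this

lemma goodExt_q2 : GoodExt q2 (fun w => w * w) 1 := by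
  rcases mem_calB_iff.mp q2_mem_calB with ⟨F, M, h⟩
  refine ⟨(differentiableOn_id).mul differentiableOn_id, fun z => rfl, ?_, fun w hw => ?_⟩
  · have : HasDerivAt (fun w : ℂ => w * w) (0 * 1 + 1 * 0) 0 :=
      ((hasDerivAt_id (0:ℂ)).mul (hasDerivAt_id (0:ℂ))).congr_deriv (by simp)
    simpa using this.deriv
  · have h := abs_lt_one_of_mem hw
    simp only [norm_mul]
    nlinarith [norm_nonneg w]

lemma goodExt_q3 : GoodExt q3 (fun w => w * w * w) 1 := by
  refine ⟨((differentiableOn_id).mul differentiableOn_id).mul differentiableOn_id,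
    fun z => rfl, ?_, fun w hw => ?_⟩
  · have h1 : HasDerivAt (fun w : ℂ => w * w) (0 * 1 + 1 * 0) 0 :=
      ((hasDerivAt_id (0:ℂ)).mul (hasDerivAt_id (0:ℂ))).congr_deriv (by simp)
    have : HasDerivAt (fun w : ℂ => w * w * w) ((0*1+1*0) * 0 + (0*0) * 1) 0 :=
      (h1.mul (hasDerivAt_id (0:ℂ))).congr_deriv (by simp)
    simpa using this.deriv
  · have h := abs_lt_one_of_mem hw
    simp only [norm_mul]
    nlinarith [norm_nonneg w]

noncomputable def half : 𝔻 := Complex.UnitDisc.mk (((1:ℝ)/2 : ℝ) : ℂ)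
  (by rw [Complex.norm_real, Real.norm_eq_abs]; rw [abs_of_pos]; norm_num; norm_num)

lemma norm_Tq2_lt_one (hT : IsAlgAutOn calB T) (w : 𝔻) : ‖T q2 w‖ < 1 := by
  have hle : ∀ v : 𝔻, ‖T q2 v‖ ≤ 1 := fun v => by
    simpa using char_bound hT goodExt_q2 v
  rcases lt_or_eq_of_le (hle w) with h | h
  · exact h
  exfalso
  rcases mem_calB_iff.mp (hT.1 q2 q2_mem_calB) with ⟨X, Mx, hXd, hXe, hX0, hXb⟩
  have hXle : ∀ ζ ∈ 𝔹, ‖X ζ‖ ≤ 1 := by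
    intro ζ hζ
    rw [show ζ = ↑(Complex.UnitDisc.mk ζ (abs_lt_one_of_mem hζ)) from (coe_mk_mem hζ).symm, hXe]
    simpa using hle _
  have hmax : IsMaxOn (norm ∘ X) 𝔹 ↑w := by
    intro ζ hζ
    simp only [Function.comp_apply, Set.mem_setOf_eq]
    rw [hXe w]
    calc ‖X ζ‖ ≤ 1 := hXle ζ hζ
      _ = ‖T q2 w‖ := by rw [h]
  have heq := Complex.eqOn_of_isPreconnected_of_isMaxOn_norm
    (convex_ball (0:ℂ) 1).isPreconnected Metric.isOpen_ball hXd (coe_mem_ball w) hmax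
  set cst := X ↑w with hcst
  have hconst : T q2 = cst • (1 : 𝔻 → ℂ) := by
    funext z
    have := heq (coe_mem_ball z)
    simp only [Function.const_apply] at this
    rw [← hXe z]
    simpa using this
  have : q2 = cst • (1 : 𝔻 → ℂ) := by
    apply hT.2.2.2.2.1 q2_mem_calB (const_smul_one_calB cst)
    rw [hconst, T_const hT]
  have h0 := congrFun this 0
  have hhalf := congrFun this half
  simp only [q2, Pi.smul_apply, Pi.one_apply, smul_eq_mul, mul_one] at h0 hhalf
  rw [Complex.UnitDisc.coe_zero] at h0
  rw [show ((half : 𝔻) : ℂ) = (((1:ℝ)/2 : ℝ) : ℂ) from Complex.UnitDisc.coe_mk _ _] at hhalf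
  rw [← h0] at hhalf
  norm_num at hhalf

end Aut

end Stmt2Aux
namespace Stmt2Aux

local notation "𝔹" => Metric.ball (0:ℂ) 1

section Aut

variable {T : (𝔻 → ℂ) → (𝔻 → ℂ)}

/-- The key decomposition: for `f ∈ ℬ` and `|l| < 1`,
`f = f(l) + (z² - l²)A + β(z³ - l³)` with `A ∈ ℬ`, `β ∈ ℂ`. -/
lemma decomp {f : 𝔻 → ℂ} (hf : f ∈ calB) {l : ℂ} (hl : ‖l‖ < 1) :
    ∃ A ∈ calB, ∃ β : ℂ, ∀ z : 𝔻,
      f z = f (Complex.UnitDisc.mk l hl) + (q2 z - l*l) * A z + β * (q3 z - l*l*l) := by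
  rcases mem_calB_iff.mp hf with ⟨F, M, hFd, hFe, hF0, hFb⟩
  have hlB : l ∈ 𝔹 := by
    simpa [Metric.mem_ball, dist_zero_right] using hl
  have hFl : F l = f (Complex.UnitDisc.mk l hl) := by
    rw [← hFe (Complex.UnitDisc.mk l hl), Complex.UnitDisc.coe_mk]
  have hF' : HasDerivAt F 0 0 := hasDerivAt_zero_of_goodExt ⟨hFd, hFe, hF0, hFb⟩
  have hM0 : 0 ≤ M := GoodExt.nonneg ⟨hFd, hFe, hF0, hFb⟩
  -- the first division
  have hF1d : DifferentiableOn ℂ (fun ζ => F ζ - F l) 𝔹 :=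
    hFd.sub (differentiableOn_const _)
  have hF1b : ∀ ζ ∈ 𝔹, ‖F ζ - F l‖ ≤ M + M := fun ζ hζ =>
    le_trans (norm_sub_le _ _) (add_le_add (hFb ζ hζ) (hFb l hlB))
  obtain ⟨hHd, hHb, hHid⟩ := bddDiv hF1d hF1b hlB (sub_self (F l))
  set H := dslope (fun ζ => F ζ - F l) l with hH_def
  obtain ⟨MH, hHb⟩ : ∃ C, ∀ w ∈ 𝔹, ‖H w‖ ≤ C := ⟨_, hHb⟩
  by_cases hl0 : l = 0
  · -- case l = 0
    subst hl0
    have hH0 : H 0 = 0 := by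
      rw [hH_def, dslope_same]
      have : HasDerivAt (fun ζ => F ζ - F 0) 0 0 := hF'.sub_const _
      exact this.deriv
    obtain ⟨hgd, hgb, hgid⟩ := bddDiv hHd hHb (Metric.mem_ball_self one_pos) hH0
    set g := dslope H 0 with hg_def
    obtain ⟨Mg, hgb⟩ : ∃ C, ∀ w ∈ 𝔹, ‖g w‖ ≤ C := ⟨_, hgb⟩
    set c0 := g 0 with hc0_def
    set c1 := deriv g 0 with hc1_def
    have hgdiff : DifferentiableAt ℂ g 0 :=
      hgd.differentiableAt (Metric.isOpen_ball.mem_nhds (Metric.mem_ball_self one_pos))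
    have hg' : HasDerivAt g c1 0 := hgdiff.hasDerivAt
    -- G2
    have hG2d : DifferentiableOn ℂ (fun ζ => g ζ - (c0 + c1 * ζ)) 𝔹 := by
      apply hgd.sub
      exact (differentiableOn_const _).add ((differentiableOn_const _).mul differentiableOn_id)
    have hG2b : ∀ ζ ∈ 𝔹, ‖g ζ - (c0 + c1 * ζ)‖ ≤ Mg + (‖c0‖ + ‖c1‖) := by
      intro ζ hζ
      have h1 := hgb ζ hζ
      have h2 : ‖c0 + c1 * ζ‖ ≤ ‖c0‖ + ‖c1‖ := by
        refine le_trans (norm_add_le _ _) (add_le_add le_rfl ?_)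
        rw [norm_mul]
        have := abs_lt_one_of_mem hζ
        calc ‖c1‖ * ‖ζ‖ ≤ ‖c1‖ * 1 := by
              refine mul_le_mul_of_nonneg_left ?_ (norm_nonneg _)
              exact le_of_lt this
          _ = ‖c1‖ := mul_one _
      calc ‖g ζ - (c0 + c1 * ζ)‖ ≤ ‖g ζ‖ + ‖c0 + c1 * ζ‖ := norm_sub_le _ _
        _ ≤ _ := add_le_add h1 h2
    have hG20 : (fun ζ => g ζ - (c0 + c1 * ζ)) 0 = 0 := by simp [hc0_def]
    obtain ⟨hh1d, hh1b, hh1id⟩ := bddDiv hG2d hG2b (Metric.mem_ball_self one_pos) hG20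
    set h1f := dslope (fun ζ => g ζ - (c0 + c1 * ζ)) 0 with hh1_def
    obtain ⟨M1, hh1b⟩ : ∃ C, ∀ w ∈ 𝔹, ‖h1f w‖ ≤ C := ⟨_, hh1b⟩
    have hh10 : h1f 0 = 0 := by
      rw [hh1_def, dslope_same]
      have h2 : HasDerivAt (fun ζ => g ζ - (c0 + c1 * ζ)) 0 0 :=
        (hg'.sub ((hasDerivAt_const 0 c0).add
          ((hasDerivAt_const 0 c1).mul (hasDerivAt_id 0)))).congr_deriv (by simp)
      exact h2.deriv
    obtain ⟨hqd, hqb, hqid⟩ := bddDiv hh1d hh1b (Metric.mem_ball_self one_pos) hh10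
    set hqf := dslope h1f 0 with hhq_def
    obtain ⟨Mq, hqb⟩ : ∃ C, ∀ w ∈ 𝔹, ‖hqf w‖ ≤ C := ⟨_, hqb⟩
    have hqdiff : DifferentiableAt ℂ hqf 0 :=
      hqd.differentiableAt (Metric.isOpen_ball.mem_nhds (Metric.mem_ball_self one_pos))
    -- A
    refine ⟨fun z : 𝔻 => c0 + (z:ℂ) * z * hqf z, ?_, c1, ?_⟩
    · refine mem_calB_iff.mpr ⟨fun ζ => c0 + ζ * ζ * hqf ζ, ‖c0‖ + Mq, ?_, fun z => rfl, ?_, ?_⟩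
      · exact (differentiableOn_const _).add
          ((differentiableOn_id.mul differentiableOn_id).mul hqd)
      · have hmul : HasDerivAt (fun ζ : ℂ => ζ * ζ * hqf ζ)
            ((0 * 1 + 1 * 0) * hqf 0 + 0 * 0 * deriv hqf 0) 0 := by
          have := ((hasDerivAt_id (0:ℂ)).mul (hasDerivAt_id (0:ℂ))).mul hqdiff.hasDerivAt
          apply this.congr_deriv
          simp
        have : HasDerivAt (fun ζ : ℂ => c0 + ζ * ζ * hqf ζ) 0 0 :=
          ((hasDerivAt_const (0:ℂ) c0).add hmul).congr_deriv (by ring)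
        exact this.deriv
      · intro ζ hζ
        have h2 := hqb ζ hζ
        have h3 := abs_lt_one_of_mem hζ
        refine le_trans (norm_add_le _ _) (add_le_add le_rfl ?_)
        rw [norm_mul, norm_mul]
        calc ‖ζ‖ * ‖ζ‖ * ‖hqf ζ‖ ≤ 1 * 1 * ‖hqf ζ‖ := by
              apply mul_le_mul_of_nonneg_right _ (norm_nonneg _)
              nlinarith [norm_nonneg ζ]
          _ = ‖hqf ζ‖ := by ring
          _ ≤ _ := h2
    · intro z
      set ζ := (z : ℂ)
      have id1 := hHid ζ
      have id2 := hgid ζ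
      have id3 := hh1id ζ
      have id4 := hqid ζ
      simp only [sub_zero] at id2 id3 id4
      rw [← hFe z, ← hFl]
      simp only [q2, q3, Complex.UnitDisc.coe_zero]
      linear_combination -id1 - ζ * id2 - ζ^2*id3 - ζ^3*id4
  · -- case l ≠ 0
    have hl0' : l ≠ 0 := hl0
    set β := H (-l) / (l * l) with hβ_def
    have hmlB : -l ∈ 𝔹 := by
      simpa [Metric.mem_ball, dist_zero_right] using hl
    have hGd : DifferentiableOn ℂ (fun ζ => H ζ - β * (ζ*ζ + l*ζ + l*l)) 𝔹 := by
      apply hHd.sub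
      apply (differentiableOn_const _).mul
      exact ((differentiableOn_id.mul differentiableOn_id).add
        ((differentiableOn_const _).mul differentiableOn_id)).add (differentiableOn_const _)
    have hGb : ∀ ζ ∈ 𝔹, ‖H ζ - β * (ζ*ζ + l*ζ + l*l)‖ ≤ MH + ‖β‖ * 3 := by
      intro ζ hζ
      have h1 := hHb ζ hζ
      have h2 : ‖ζ*ζ + l*ζ + l*l‖ ≤ 3 := by
        have h3 := abs_lt_one_of_mem hζ
        have h4 := hl
        have := norm_nonneg ζ
        have := norm_nonneg l
        calc ‖ζ*ζ + l*ζ + l*l‖ ≤ ‖ζ*ζ + l*ζ‖ + ‖l*l‖ := norm_add_le _ _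
          _ ≤ ‖ζ*ζ‖ + ‖l*ζ‖ + ‖l*l‖ := by linarith [norm_add_le (ζ*ζ) (l*ζ)]
          _ ≤ 3 := by
              simp only [norm_mul]
              nlinarith
      calc ‖H ζ - β * (ζ*ζ + l*ζ + l*l)‖ ≤ ‖H ζ‖ + ‖β‖ * ‖ζ*ζ + l*ζ + l*l‖ := by
            refine le_trans (norm_sub_le _ _) ?_
            rw [norm_mul]
        _ ≤ _ := add_le_add h1 (mul_le_mul_of_nonneg_left h2 (norm_nonneg _))
    have hGml : (fun ζ => H ζ - β * (ζ*ζ + l*ζ + l*l)) (-l) = 0 := by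
      show H (-l) - β * ((-l)*(-l) + l*(-l) + l*l) = 0
      have h5 : (-l)*(-l) + l*(-l) + l*l = l*l := by ring
      rw [h5, hβ_def, div_mul_cancel₀ _ (mul_ne_zero hl0' hl0'), sub_self]
    obtain ⟨hA1d, hA1b, hA1id⟩ := bddDiv hGd hGb hmlB hGml
    set A1 := dslope (fun ζ => H ζ - β * (ζ*ζ + l*ζ + l*l)) (-l) with hA1_def
    obtain ⟨MA, hA1b⟩ : ∃ C, ∀ w ∈ 𝔹, ‖A1 w‖ ≤ C := ⟨_, hA1b⟩
    -- derivative of A1 at 0 is 0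
    have h0l : (0:ℂ) - l ≠ 0 := by simpa using hl0'
    have h0ml : (0:ℂ) + l ≠ 0 := by simpa using hl0'
    have hev : A1 =ᶠ[nhds 0] fun ζ =>
        ((F ζ - F l)/(ζ - l) - β * (ζ*ζ + l*ζ + l*l))/(ζ + l) := by
      have h1 : ∀ᶠ ζ in nhds (0:ℂ), ζ ≠ -l := eventually_ne_nhds (by simpa using hl0')
      have h2 : ∀ᶠ ζ in nhds (0:ℂ), ζ ≠ l := eventually_ne_nhds (fun h => hl0' h.symm)
      filter_upwards [h1, h2] with ζ hζ1 hζ2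
      rw [hA1_def, dslope_of_ne _ hζ1, slope_def_field]
      show (H ζ - β * (ζ*ζ + l*ζ + l*l) - (H (-l) - β * ((-l)*(-l) + l*(-l) + l*l))) /
          (ζ - -l) = _
      rw [show H (-l) - β * ((-l)*(-l) + l*(-l) + l*l) = 0 from hGml, sub_zero,
        show ζ - -l = ζ + l by ring]
      congr 1
      rw [hH_def, dslope_of_ne _ hζ2, slope_def_field]
      show (F ζ - F l - (F l - F l)) / (ζ - l) - β * (ζ*ζ + l*ζ + l*l) = _
      rw [sub_self, sub_zero]
    have hderivA1 : deriv A1 0 = 0 := by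
      rw [hev.deriv_eq]
      have hdiv1 : HasDerivAt (fun ζ : ℂ => (F ζ - F l)/(ζ - l))
          ((F l - F 0) / (l*l)) 0 := by
        have := (hF'.sub_const (F l)).div ((hasDerivAt_id (0:ℂ)).sub_const l) h0l
        apply this.congr_deriv
        simp only [id_eq]
        rw [div_eq_div_iff (pow_ne_zero 2 h0l) (mul_ne_zero hl0' hl0')]
        ring
      have hq5 : HasDerivAt (fun ζ : ℂ => ζ*ζ + l*ζ + l*l) l 0 := by
        have := (((hasDerivAt_id (0:ℂ)).mul (hasDerivAt_id (0:ℂ))).add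
          ((hasDerivAt_id (0:ℂ)).const_mul l)).add_const (l*l)
        apply this.congr_deriv
        simp
      have hnum := hdiv1.sub (hq5.const_mul β)
      have hden : HasDerivAt (fun ζ : ℂ => ζ + l) 1 0 := (hasDerivAt_id (0:ℂ)).add_const l
      have hE : HasDerivAt (fun ζ : ℂ =>
          ((F ζ - F l)/(ζ - l) - β * (ζ*ζ + l*ζ + l*l))/(ζ + l)) 0 0 := by
        have hcomb := hnum.div hden h0ml
        apply hcomb.congr_deriv
        rw [div_eq_zero_iff]
        left
        simp only [Pi.sub_apply]
        field_simp
        have hll : l^2 * l⁻¹ = l := by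
          rw [sq, mul_assoc, mul_inv_cancel₀ hl0', mul_one]
        linear_combination
      exact hE.deriv
    -- A ∈ calB
    refine ⟨fun z : 𝔻 => A1 ↑z, mem_calB_iff.mpr ⟨A1, MA, hA1d, fun z => rfl, hderivA1, hA1b⟩,
      β, ?_⟩
    intro z
    set ζ := (z : ℂ)
    have e1 := hA1id ζ
    have e2 := hHid ζ
    rw [show ζ - -l = ζ + l by ring] at e1
    rw [← hFe z, ← hFl]
    simp only [q2, q3]
    linear_combination (-(ζ - l)) * e1 - e2

end Aut

end Stmt2Aux
namespace Stmt2Aux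

local notation "𝔹" => Metric.ball (0:ℂ) 1

section Aut

variable {T : (𝔻 → ℂ) → (𝔻 → ℂ)}

lemma char_eval (hT : IsAlgAutOn calB T) {f : 𝔻 → ℂ} (hf : f ∈ calB) (w : 𝔻)
    {l : ℂ} (hl : ‖l‖ < 1)
    (hl2 : T q2 w = l * l) (hl3 : T q3 w = l * l * l) :
    T f w = f (Complex.UnitDisc.mk l hl) := by
  obtain ⟨A, hA, β, hdec⟩ := decomp hf hl
  set lamd := Complex.UnitDisc.mk l hl with hlamd
  set u : 𝔻 → ℂ := q2 + (-(l*l)) • 1 with hu_def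
  set v : 𝔻 → ℂ := q3 + (-(l*l*l)) • 1 with hv_def
  have hu : u ∈ calB := add_mem_calB q2_mem_calB (const_smul_one_calB _)
  have hv : v ∈ calB := add_mem_calB q3_mem_calB (const_smul_one_calB _)
  have hfeq : f = (f lamd) • (1 : 𝔻 → ℂ) + (u * A + β • v) := by
    funext z
    have h := hdec z
    simp only [hu_def, hv_def, Pi.add_apply, Pi.mul_apply, Pi.smul_apply, Pi.one_apply,
      smul_eq_mul]
    linear_combination h
  have m1 : (f lamd) • (1:𝔻→ℂ) ∈ calB := const_smul_one_calB _
  have m2 : u * A ∈ calB := mul_mem_calB hu hA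
  have m3 : β • v ∈ calB := smul_mem_calB β hv
  have hTf : T f = (f lamd) • (1:𝔻→ℂ) + (T u * T A + β • T v) := by
    rw [show T f = T ((f lamd) • 1 + (u * A + β • v)) from congrArg T hfeq,
      hT.2.1 _ m1 _ (add_mem_calB m2 m3), hT.2.1 _ m2 _ m3, T_const hT,
      hT.2.2.2.1 _ hu _ hA, hT.2.2.1 β v hv]
  have hTu : T u w = 0 := by
    have h : T u = T q2 + (-(l*l)) • (1:𝔻→ℂ) := by
      rw [hu_def, hT.2.1 _ q2_mem_calB _ (const_smul_one_calB _), T_const hT]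
    rw [h]
    simp only [Pi.add_apply, Pi.smul_apply, Pi.one_apply, smul_eq_mul, hl2]
    ring
  have hTv : T v w = 0 := by
    have h : T v = T q3 + (-(l*l*l)) • (1:𝔻→ℂ) := by
      rw [hv_def, hT.2.1 _ q3_mem_calB _ (const_smul_one_calB _), T_const hT]
    rw [h]
    simp only [Pi.add_apply, Pi.smul_apply, Pi.one_apply, smul_eq_mul, hl3]
    ring
  have hfin := congrFun hTf w
  simp only [Pi.add_apply, Pi.mul_apply, Pi.smul_apply, Pi.one_apply, smul_eq_mul,
    hTu, hTv] at hfin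
  rw [hfin]
  ring

lemma exists_psi (hT : IsAlgAutOn calB T) :
    ∃ ψ : 𝔻 → 𝔻, (∀ f ∈ calB, ∀ w, T f w = f (ψ w)) ∧
      (∀ w, (↑(ψ w) : ℂ) * ↑(ψ w) = T q2 w) ∧
      (∀ w, (↑(ψ w) : ℂ) * ↑(ψ w) * ↑(ψ w) = T q3 w) := by
  classical
  have hyx : ∀ w, T q3 w * T q3 w = T q2 w * T q2 w * T q2 w := by
    intro w
    have h1 : q3 * q3 = q2 * (q2 * q2) := by
      funext z; simp only [Pi.mul_apply, q2, q3]; ring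
    have h2 : T (q3 * q3) = T q3 * T q3 := hT.2.2.2.1 _ q3_mem_calB _ q3_mem_calB
    have h3 : T (q2 * (q2*q2)) = T q2 * (T q2 * T q2) := by
      rw [hT.2.2.2.1 _ q2_mem_calB _ (mul_mem_calB q2_mem_calB q2_mem_calB),
        hT.2.2.2.1 _ q2_mem_calB _ q2_mem_calB]
    have h4 := congrFun (h2.symm.trans ((congrArg T h1).trans h3)) w
    simp only [Pi.mul_apply] at h4
    rw [h4]; ring
  set ψc : 𝔻 → ℂ := fun w => if T q2 w = 0 then 0 else T q3 w / T q2 w with hψc_def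
  have h2 : ∀ w, ψc w * ψc w = T q2 w := by
    intro w
    by_cases h : T q2 w = 0
    · simp [hψc_def, h]
    · simp only [hψc_def, if_neg h]
      field_simp
      linear_combination hyx w
  have h3 : ∀ w, ψc w * ψc w * ψc w = T q3 w := by
    intro w
    by_cases h : T q2 w = 0
    · have hy0 : T q3 w = 0 := by
        have := hyx w
        rw [h] at this
        simpa [mul_self_eq_zero] using this
      simp [hψc_def, h, hy0]
    · simp only [hψc_def, if_neg h]
      field_simp
      linear_combination T q3 w * hyx w
  have habs : ∀ w, ‖ψc w‖ < 1 := by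
    intro w
    have hlt := norm_Tq2_lt_one hT w
    have hsq : ‖ψc w‖ * ‖ψc w‖ = ‖T q2 w‖ := by
      rw [← norm_mul, h2 w]
    nlinarith [norm_nonneg (ψc w)]
  refine ⟨fun w => Complex.UnitDisc.mk (ψc w) (habs w), fun f hf w => ?_, fun w => ?_, fun w => ?_⟩
  · exact char_eval hT hf w (habs w) (h2 w).symm (h3 w).symm
  · rw [Complex.UnitDisc.coe_mk]; exact h2 w
  · rw [Complex.UnitDisc.coe_mk]; exact h3 w

end Aut

end Stmt2Aux
namespace Stmt2Aux

local notation "𝔹" => Metric.ball (0:ℂ) 1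

section Aut

variable {T : (𝔻 → ℂ) → (𝔻 → ℂ)}

lemma exists_inv (hT : IsAlgAutOn calB T) :
    ∃ S : (𝔻 → ℂ) → (𝔻 → ℂ), IsAlgAutOn calB S ∧
      (∀ g ∈ calB, T (S g) = g) ∧ (∀ f ∈ calB, S (T f) = f) := by
  classical
  obtain ⟨hmap, hadd, hsmul, hmul, hinj, hsurj⟩ := hT
  set S : (𝔻 → ℂ) → (𝔻 → ℂ) := fun g => if h : g ∈ calB then (hsurj h).choose else g
    with hS_def
  have hSmem : ∀ g ∈ calB, S g ∈ calB := by
    intro g hg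
    simp only [hS_def, dif_pos hg]
    exact (hsurj hg).choose_spec.1
  have hTS : ∀ g ∈ calB, T (S g) = g := by
    intro g hg
    simp only [hS_def, dif_pos hg]
    exact (hsurj hg).choose_spec.2
  have hST : ∀ f ∈ calB, S (T f) = f := by
    intro f hf
    exact hinj (hSmem _ (hmap f hf)) hf (hTS _ (hmap f hf))
  refine ⟨S, ⟨hSmem, ?_, ?_, ?_, ?_, ?_⟩, hTS, hST⟩
  · intro g1 hg1 g2 hg2
    refine hinj (hSmem _ (add_mem_calB hg1 hg2))
      (add_mem_calB (hSmem _ hg1) (hSmem _ hg2)) ?_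
    rw [hTS _ (add_mem_calB hg1 hg2), hadd _ (hSmem _ hg1) _ (hSmem _ hg2),
      hTS _ hg1, hTS _ hg2]
  · intro c g hg
    refine hinj (hSmem _ (smul_mem_calB c hg)) (smul_mem_calB c (hSmem _ hg)) ?_
    rw [hTS _ (smul_mem_calB c hg), hsmul c _ (hSmem _ hg), hTS _ hg]
  · intro g1 hg1 g2 hg2
    refine hinj (hSmem _ (mul_mem_calB hg1 hg2))
      (mul_mem_calB (hSmem _ hg1) (hSmem _ hg2)) ?_
    rw [hTS _ (mul_mem_calB hg1 hg2), hmul _ (hSmem _ hg1) _ (hSmem _ hg2),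
      hTS _ hg1, hTS _ hg2]
  · intro g1 hg1 g2 hg2 h
    rw [← hTS _ hg1, ← hTS _ hg2, h]
  · intro f hf
    exact ⟨T f, hmap f hf, hST f hf⟩

end Aut

end Stmt2Aux
namespace Stmt2Aux

local notation "𝔹" => Metric.ball (0:ℂ) 1

section Aut

variable {T : (𝔻 → ℂ) → (𝔻 → ℂ)}

/-- The pointwise map `ψ` extends to a holomorphic function on the ball, provided the
zero set of `x = ψ²` is a single point. -/
lemma holoPsi {ψ : 𝔻 → 𝔻} {x y : 𝔻 → ℂ} (hx : x ∈ calB) (hy : y ∈ calB)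
    (h2 : ∀ w, (↑(ψ w) : ℂ) * ↑(ψ w) = x w)
    (h3 : ∀ w, (↑(ψ w) : ℂ) * ↑(ψ w) * ↑(ψ w) = y w)
    {ν : 𝔻} (hzero : ∀ w, x w = 0 ↔ w = ν) :
    ∃ Ψ : ℂ → ℂ, DifferentiableOn ℂ Ψ 𝔹 ∧ ∀ z : 𝔻, Ψ ↑z = ↑(ψ z) := by
  classical
  rcases mem_calB_iff.mp hx with ⟨X, MX, hXd, hXe, hX0, hXb⟩
  rcases mem_calB_iff.mp hy with ⟨Y, MY, hYd, hYe, hY0, hYb⟩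
  set Ψ : ℂ → ℂ := fun ζ => if h : ‖ζ‖ < 1 then ↑(ψ (Complex.UnitDisc.mk ζ h)) else 0
    with hΨ_def
  have hΨe : ∀ z : 𝔻, Ψ ↑z = ↑(ψ z) := by
    intro z
    simp only [hΨ_def, dif_pos z.norm_lt_one, Complex.UnitDisc.mk_coe]
  refine ⟨Ψ, ?_, hΨe⟩
  have hψν : (↑(ψ ν) : ℂ) = 0 := by
    have hxν : x ν = 0 := (hzero ν).mpr rfl
    have := h2 ν
    rw [hxν, mul_self_eq_zero] at this
    exact this
  have hXcoe : ∀ {ζ} (hζ : ζ ∈ 𝔹), X ζ = x (Complex.UnitDisc.mk ζ (abs_lt_one_of_mem hζ)) := by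
    intro ζ hζ
    conv_lhs => rw [show ζ = ↑(Complex.UnitDisc.mk ζ (abs_lt_one_of_mem hζ)) from
      (coe_mk_mem hζ).symm]
    rw [hXe]
  have hYcoe : ∀ {ζ} (hζ : ζ ∈ 𝔹), Y ζ = y (Complex.UnitDisc.mk ζ (abs_lt_one_of_mem hζ)) := by
    intro ζ hζ
    conv_lhs => rw [show ζ = ↑(Complex.UnitDisc.mk ζ (abs_lt_one_of_mem hζ)) from
      (coe_mk_mem hζ).symm]
    rw [hYe]
  have hΨcoe : ∀ {ζ} (hζ : ζ ∈ 𝔹),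
      Ψ ζ = ↑(ψ (Complex.UnitDisc.mk ζ (abs_lt_one_of_mem hζ))) := by
    intro ζ hζ
    simp only [hΨ_def, dif_pos (abs_lt_one_of_mem hζ)]
  -- differentiability away from ν
  have hXne : ∀ ζ ∈ 𝔹 \ {(↑ν : ℂ)}, X ζ ≠ 0 := by
    rintro ζ ⟨hζ, hne⟩ h
    rw [hXcoe hζ] at h
    have := (hzero _).mp h
    apply hne
    rw [← this, coe_mk_mem hζ]
    exact rfl
  have hdiff1 : DifferentiableOn ℂ (fun ζ => Y ζ / X ζ) (𝔹 \ {(↑ν : ℂ)}) :=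
    (hYd.mono diff_subset).div (hXd.mono diff_subset) hXne
  have heqon : Set.EqOn Ψ (fun ζ => Y ζ / X ζ) (𝔹 \ {(↑ν : ℂ)}) := by
    rintro ζ ⟨hζ, hne⟩
    have hXζ := hXne ζ ⟨hζ, hne⟩
    have hp2 := h2 (Complex.UnitDisc.mk ζ (abs_lt_one_of_mem hζ))
    have hp3 := h3 (Complex.UnitDisc.mk ζ (abs_lt_one_of_mem hζ))
    rw [← hXcoe hζ] at hp2
    rw [← hYcoe hζ] at hp3
    show Ψ ζ = Y ζ / X ζ
    rw [hΨcoe hζ, eq_div_iff hXζ, ← hp2, ← hp3]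
    ring
  have hdiff2 : DifferentiableOn ℂ Ψ (𝔹 \ {(↑ν : ℂ)}) := hdiff1.congr heqon
  -- continuity at ν
  have hXat : ContinuousAt X ↑ν :=
    (hXd.differentiableAt (ball_mem_nhds_coe ν)).continuousAt
  have hXν : X ↑ν = 0 := by
    rw [hXe ν, ← h2 ν, hψν, mul_zero]
  have hΨν : Ψ ↑ν = 0 := by rw [hΨe ν, hψν]
  have hcont : ContinuousAt Ψ ↑ν := by
    rw [ContinuousAt, hΨν]
    apply squeeze_zero_norm'
    · filter_upwards [ball_mem_nhds_coe ν] with ζ hζ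
      have hval : ‖Ψ ζ‖ ^ 2 = ‖X ζ‖ := by
        rw [hΨcoe hζ, hXcoe hζ, ← h2, norm_mul, sq]
      rw [← Real.sqrt_sq (norm_nonneg (Ψ ζ)), hval]
    · have hc : ContinuousAt (fun ζ => Real.sqrt (‖X ζ‖)) ↑ν :=
        Real.continuous_sqrt.continuousAt.comp (continuous_norm.continuousAt.comp hXat)
      have : (fun ζ => Real.sqrt (‖X ζ‖)) ↑ν = 0 := by
        simp [hXν]
      rw [← this]
      exact hc
  exact (differentiableOn_compl_singleton_and_continuousAt_iff (ball_mem_nhds_coe ν)).mp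
    ⟨hdiff2, hcont⟩

/-- If `ψ` has a two-sided inverse and `ψ² = x ∈ calB`, then `ψ 0 = 0`. -/
lemma psi_zero {ψ ψt : 𝔻 → 𝔻} {Ψ Ψt : ℂ → ℂ}
    (hΨd : DifferentiableOn ℂ Ψ 𝔹) (hΨe : ∀ z : 𝔻, Ψ ↑z = ↑(ψ z))
    (hΨtd : DifferentiableOn ℂ Ψt 𝔹) (hΨte : ∀ z : 𝔻, Ψt ↑z = ↑(ψt z))
    {x : 𝔻 → ℂ} (hx : x ∈ calB) (h2 : ∀ w, (↑(ψ w) : ℂ) * ↑(ψ w) = x w)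
    (hinv : ∀ w, ψt (ψ w) = w) : ψ 0 = 0 := by
  by_contra hμ
  have hμc : (↑(ψ 0) : ℂ) ≠ 0 := fun h => hμ (Complex.UnitDisc.coe_eq_zero.mp h)
  rcases mem_calB_iff.mp hx with ⟨X, MX, hXd, hXe, hX0, hXb⟩
  have h0ball : 𝔹 ∈ nhds (0:ℂ) := Metric.ball_mem_nhds 0 one_pos
  have hXΨ : X =ᶠ[nhds (0:ℂ)] fun ζ => Ψ ζ * Ψ ζ := by
    filter_upwards [h0ball] with ζ hζ
    have : ζ = ↑(Complex.UnitDisc.mk ζ (abs_lt_one_of_mem hζ)) := (coe_mk_mem hζ).symm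
    rw [this, hXe, hΨe, h2]
  have hΨ0 : Ψ 0 = ↑(ψ 0) := by
    have := hΨe 0
    rwa [Complex.UnitDisc.coe_zero] at this
  have hΨat : DifferentiableAt ℂ Ψ 0 := hΨd.differentiableAt h0ball
  set d := deriv Ψ 0 with hd_def
  have hd : HasDerivAt Ψ d 0 := hΨat.hasDerivAt
  have hX' : HasDerivAt X (d * Ψ 0 + Ψ 0 * d) 0 :=
    HasDerivAt.congr_of_eventuallyEq (hd.mul hd) hXΨ
  have hXderiv : d * Ψ 0 + Ψ 0 * d = 0 := by rw [← hX'.deriv, hX0]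
  have hd0 : d = 0 := by
    rw [hΨ0] at hXderiv
    have h1 : (↑(ψ 0) : ℂ) * (d + d) = 0 := by linear_combination hXderiv
    rcases mul_eq_zero.mp h1 with h | h
    · exact absurd h hμc
    · have h2 : (2:ℂ) * d = 0 := by linear_combination h
      simpa using (mul_eq_zero.mp h2).resolve_left (by norm_num)
  -- chain rule contradiction
  have hid : (fun ζ => Ψt (Ψ ζ)) =ᶠ[nhds (0:ℂ)] id := by
    filter_upwards [h0ball] with ζ hζ
    have hcz : ζ = ↑(Complex.UnitDisc.mk ζ (abs_lt_one_of_mem hζ)) := (coe_mk_mem hζ).symm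
    show Ψt (Ψ ζ) = ζ
    conv_lhs => rw [hcz, hΨe, hΨte, hinv]
    exact hcz.symm
  have hΨtat : DifferentiableAt ℂ Ψt (Ψ 0) := by
    rw [hΨ0]
    exact hΨtd.differentiableAt (ball_mem_nhds_coe (ψ 0))
  have hcomp : HasDerivAt (fun ζ => Ψt (Ψ ζ)) (deriv Ψt (Ψ 0) * d) 0 :=
    (hΨtat.hasDerivAt).comp 0 hd
  have e1 : deriv (fun ζ => Ψt (Ψ ζ)) 0 = deriv Ψt (Ψ 0) * d := hcomp.deriv
  have e2 : deriv (fun ζ => Ψt (Ψ ζ)) 0 = 1 := by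
    rw [Filter.EventuallyEq.deriv_eq hid, deriv_id]
  exact one_ne_zero (by rw [← e2, e1, hd0, mul_zero])

end Aut

end Stmt2Aux
namespace Stmt2Aux

local notation "𝔹" => Metric.ball (0:ℂ) 1

section Aut

variable {T : (𝔻 → ℂ) → (𝔻 → ℂ)}

lemma cube_cancel {a b : ℂ} (k2 : b * b = a * a) (k3 : b * b * b = a * a * a) : a = b := by
  rcases eq_or_ne a 0 with h | h
  · rw [h] at k2
    simp only [mul_zero] at k2
    rw [h, eq_comm]
    exact mul_self_eq_zero.mp (by linear_combination k2)
  · have hb : b ≠ 0 := by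
      intro hb
      rw [hb] at k2
      exact h (mul_self_eq_zero.mp (by linear_combination -k2))
    have hbb : b * b ≠ 0 := mul_ne_zero hb hb
    apply mul_right_cancel₀ hbb
    calc a * (b * b) = a * (a * a) := by rw [k2]
      _ = b * b * b := by linear_combination -k3
      _ = b * (b * b) := by ring
  
lemma forward (hT : IsAlgAutOn calB T) :
    ∃ θ : ℝ, ∃ φ : 𝔻 → 𝔻,
      (∀ z : 𝔻, (↑(φ z) : ℂ) = Complex.exp (θ * Complex.I) * ↑z) ∧
      ∀ f ∈ calB, T f = f ∘ φ := by
  obtain ⟨S, hS, hTS, hST⟩ := exists_inv hT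
  obtain ⟨ψ, hchar, h2, h3⟩ := exists_psi hT
  obtain ⟨ψt, hchart, h2t, h3t⟩ := exists_psi hS
  -- inverse identities
  have key : ∀ f ∈ calB, ∀ w, f w = f (ψt (ψ w)) := by
    intro f hf w
    have e1 : T (S f) w = (S f) (ψ w) := hchar _ (hS.1 f hf) w
    have e2 : (S f) (ψ w) = f (ψt (ψ w)) := hchart _ hf (ψ w)
    rw [hTS f hf] at e1
    rw [e1, e2]
  have keyt : ∀ f ∈ calB, ∀ w, f w = f (ψ (ψt w)) := by
    intro f hf w
    have e1 : S (T f) w = (T f) (ψt w) := hchart _ (hT.1 f hf) w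
    have e2 : (T f) (ψt w) = f (ψ (ψt w)) := hchar _ hf (ψt w)
    rw [hST f hf] at e1
    rw [e1, e2]
  have hinv1 : ∀ w, ψt (ψ w) = w := by
    intro w
    have k2 := key q2 q2_mem_calB w
    have k3 := key q3 q3_mem_calB w
    simp only [q2, q3] at k2 k3
    exact Complex.UnitDisc.coe_injective (cube_cancel k2 k3)
  have hinv2 : ∀ w, ψ (ψt w) = w := by
    intro w
    have k2 := keyt q2 q2_mem_calB w
    have k3 := keyt q3 q3_mem_calB w
    simp only [q2, q3] at k2 k3
    exact Complex.UnitDisc.coe_injective (cube_cancel k2 k3)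
  -- zero sets
  have hzero : ∀ w, T q2 w = 0 ↔ w = ψt 0 := by
    intro w
    constructor
    · intro h
      have h0 : (↑(ψ w) : ℂ) * ↑(ψ w) = 0 := by rw [h2 w, h]
      have hψw : ψ w = 0 := Complex.UnitDisc.coe_eq_zero.mp (mul_self_eq_zero.mp h0)
      rw [← hinv1 w, hψw]
    · rintro rfl
      rw [← h2 (ψt 0), hinv2 0]
      simp
  have hzerot : ∀ w, S q2 w = 0 ↔ w = ψ 0 := by
    intro w
    constructor
    · intro h
      have h0 : (↑(ψt w) : ℂ) * ↑(ψt w) = 0 := by rw [h2t w, h]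
      have hψw : ψt w = 0 := Complex.UnitDisc.coe_eq_zero.mp (mul_self_eq_zero.mp h0)
      rw [← hinv2 w, hψw]
    · rintro rfl
      rw [← h2t (ψ 0), hinv1 0]
      simp
  -- holomorphic extensions
  obtain ⟨Ψ, hΨd, hΨe⟩ := holoPsi (hT.1 q2 q2_mem_calB) (hT.1 q3 q3_mem_calB) h2 h3 hzero
  obtain ⟨Ψt, hΨtd, hΨte⟩ := holoPsi (hS.1 q2 q2_mem_calB) (hS.1 q3 q3_mem_calB) h2t h3t hzerot
  -- fixed point at 0
  have hψ00 : ψ 0 = 0 := psi_zero hΨd hΨe hΨtd hΨte (hT.1 q2 q2_mem_calB) h2 hinv1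
  have hψt00 : ψt 0 = 0 := psi_zero hΨtd hΨte hΨd hΨe (hS.1 q2 q2_mem_calB) h2t hinv2
  have hΨ0 : Ψ 0 = 0 := by
    have := hΨe 0
    rwa [Complex.UnitDisc.coe_zero, hψ00, Complex.UnitDisc.coe_zero] at this
  have hΨt0 : Ψt 0 = 0 := by
    have := hΨte 0
    rwa [Complex.UnitDisc.coe_zero, hψt00, Complex.UnitDisc.coe_zero] at this
  -- maps to
  have hΨcoe : ∀ {ζ} (hζ : ζ ∈ 𝔹),
      Ψ ζ = ↑(ψ (Complex.UnitDisc.mk ζ (abs_lt_one_of_mem hζ))) := by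
    intro ζ hζ
    conv_lhs => rw [show ζ = ↑(Complex.UnitDisc.mk ζ (abs_lt_one_of_mem hζ)) from
      (coe_mk_mem hζ).symm, hΨe]
  have hΨtcoe : ∀ {ζ} (hζ : ζ ∈ 𝔹),
      Ψt ζ = ↑(ψt (Complex.UnitDisc.mk ζ (abs_lt_one_of_mem hζ))) := by
    intro ζ hζ
    conv_lhs => rw [show ζ = ↑(Complex.UnitDisc.mk ζ (abs_lt_one_of_mem hζ)) from
      (coe_mk_mem hζ).symm, hΨte]
  have hmaps : Set.MapsTo Ψ 𝔹 𝔹 := by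
    intro ζ hζ
    rw [hΨcoe hζ]
    exact coe_mem_ball _
  have hmapst : Set.MapsTo Ψt 𝔹 𝔹 := by
    intro ζ hζ
    rw [hΨtcoe hζ]
    exact coe_mem_ball _
  have hPtP : ∀ ζ ∈ 𝔹, Ψt (Ψ ζ) = ζ := by
    intro ζ hζ
    rw [hΨcoe hζ, hΨte, hinv1]
    exact coe_mk_mem hζ
  -- Schwarz equalities
  have habs_eq : ∀ ζ ∈ 𝔹, ‖Ψ ζ‖ = ‖ζ‖ := by
    intro ζ hζ
    have h1 : ‖Ψ ζ‖ ≤ ‖ζ‖ :=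
      Complex.norm_le_norm_of_mapsTo_ball hΨd (hmaps.mono_right ball_subset_closedBall) hΨ0 (abs_lt_one_of_mem hζ)
    have h2' : ‖ζ‖ ≤ ‖Ψ ζ‖ := by
      have h3' : ‖Ψt (Ψ ζ)‖ ≤ ‖Ψ ζ‖ :=
        Complex.norm_le_norm_of_mapsTo_ball hΨtd (hmapst.mono_right ball_subset_closedBall) hΨt0
          (abs_lt_one_of_mem (hmaps hζ))
      rwa [hPtP ζ hζ] at h3'
    exact le_antisymm h1 h2'
  -- the dslope is a constant of modulus 1
  have h0ball : 𝔹 ∈ nhds (0:ℂ) := Metric.ball_mem_nhds 0 one_pos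
  have hgd : DifferentiableOn ℂ (dslope Ψ 0) 𝔹 := (differentiableOn_dslope h0ball).mpr hΨd
  have hg1 : ∀ ζ ∈ 𝔹, ζ ≠ 0 → ‖dslope Ψ 0 ζ‖ = 1 := by
    intro ζ hζ hne
    rw [dslope_of_ne _ hne, slope_def_field, hΨ0, sub_zero, sub_zero, norm_div,
      habs_eq ζ hζ]
    exact div_self (fun h => hne (norm_eq_zero.mp h))
  have hhalfB : ((1:ℂ)/2) ∈ 𝔹 := by
    simp only [Metric.mem_ball, dist_zero_right]
    norm_num
  have hhalfne : ((1:ℂ)/2) ≠ 0 := by norm_num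
  have hg0 : ‖dslope Ψ 0 0‖ ≤ 1 := by
    rw [dslope_same]
    exact Complex.norm_deriv_le_one_of_mapsTo_ball hΨd (by rw [hΨ0]; exact hmaps.mono_right ball_subset_closedBall) one_pos
  have hmax : IsMaxOn (norm ∘ dslope Ψ 0) 𝔹 ((1:ℂ)/2) := by
    intro ζ hζ
    simp only [Function.comp_apply, Set.mem_setOf_eq,
      hg1 _ hhalfB hhalfne]
    rcases eq_or_ne ζ 0 with rfl | hne
    · exact hg0
    · rw [hg1 _ hζ hne]
  have heq := Complex.eqOn_of_isPreconnected_of_isMaxOn_norm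
    (convex_ball (0:ℂ) 1).isPreconnected Metric.isOpen_ball hgd hhalfB hmax
  set η := dslope Ψ 0 ((1:ℂ)/2) with hη_def
  have hηabs : ‖η‖ = 1 := hg1 _ hhalfB hhalfne
  have hΨlin : ∀ ζ ∈ 𝔹, Ψ ζ = η * ζ := by
    intro ζ hζ
    have hs := sub_smul_dslope Ψ 0 ζ
    rw [smul_eq_mul, sub_zero, hΨ0, sub_zero] at hs
    rw [← hs, heq hζ]
    simp [Function.const]
    ring
  have hexp : Complex.exp ((η.arg : ℂ) * Complex.I) = η := by
    have := Complex.norm_mul_exp_arg_mul_I η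
    rwa [hηabs, Complex.ofReal_one, one_mul] at this
  refine ⟨η.arg, ψ, fun z => ?_, fun f hf => ?_⟩
  · rw [← hΨe z, hΨlin _ (coe_mem_ball z), hexp]
  · funext w
    exact hchar f hf w

end Aut

end Stmt2Aux
namespace Stmt2Aux

local notation "𝔹" => Metric.ball (0:ℂ) 1

lemma comp_rot {f : 𝔻 → ℂ} (hf : f ∈ calB) {e : ℂ} (he : ‖e‖ = 1)
    (φr : 𝔻 → 𝔻) (hφr : ∀ z : 𝔻, (↑(φr z) : ℂ) = e * ↑z) : f ∘ φr ∈ calB := by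
  rcases mem_calB_iff.mp hf with ⟨F, M, hFd, hFe, hF0, hFb⟩
  have hmaps : Set.MapsTo (fun ζ : ℂ => e * ζ) 𝔹 𝔹 := by
    intro ζ hζ
    simp only [Metric.mem_ball, dist_zero_right, norm_mul, he, one_mul]
    exact abs_lt_one_of_mem hζ
  refine mem_calB_iff.mpr ⟨fun ζ => F (e * ζ), M, ?_, ?_, ?_, ?_⟩
  · exact hFd.comp ((differentiable_id.const_mul e).differentiableOn) hmaps
  · intro z
    show F (e * ↑z) = f (φr z)
    rw [← hφr z, hFe]
  · have hinner : HasDerivAt (fun ζ : ℂ => e * ζ) e 0 :=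
      ((hasDerivAt_id (0:ℂ)).const_mul e).congr_deriv (by simp)
    have hF' : HasDerivAt F 0 ((fun ζ : ℂ => e * ζ) 0) := by
      simp only [mul_zero]
      exact hasDerivAt_zero_of_goodExt ⟨hFd, hFe, hF0, hFb⟩
    have := HasDerivAt.comp (0:ℂ) hF' hinner
    simp only [zero_mul] at this
    exact this.deriv
  · intro ζ hζ
    exact hFb _ (hmaps hζ)

lemma backward {T : (𝔻 → ℂ) → (𝔻 → ℂ)} {θ : ℝ} {φ : 𝔻 → 𝔻}
    (hφ : ∀ z : 𝔻, (↑(φ z) : ℂ) = Complex.exp (θ * Complex.I) * ↑z)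
    (hTf : ∀ f ∈ calB, T f = f ∘ φ) : IsAlgAutOn calB T := by
  set e := Complex.exp ((θ:ℂ) * Complex.I) with he_def
  have habs : ‖e‖ = 1 := Complex.norm_exp_ofReal_mul_I θ
  have habs' : ‖Complex.exp (-(θ:ℂ) * Complex.I)‖ = 1 := by
    have := Complex.norm_exp_ofReal_mul_I (-θ)
    rwa [Complex.ofReal_neg] at this
  have hene : e ≠ 0 := Complex.exp_ne_zero _
  set φ' : 𝔻 → 𝔻 := fun z =>
    Complex.UnitDisc.mk (Complex.exp (-(θ:ℂ) * Complex.I) * ↑z)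
      (by rw [norm_mul, habs', one_mul]; exact z.norm_lt_one) with hφ'_def
  have hφ'coe : ∀ z : 𝔻, (↑(φ' z) : ℂ) = Complex.exp (-(θ:ℂ) * Complex.I) * ↑z := fun z =>
    Complex.UnitDisc.coe_mk _ _
  have hee : e * Complex.exp (-(θ:ℂ) * Complex.I) = 1 := by
    rw [he_def, ← Complex.exp_add]
    ring_nf
    exact Complex.exp_zero
  have hφφ' : ∀ z, φ (φ' z) = z := by
    intro z
    apply Complex.UnitDisc.coe_injective
    rw [hφ (φ' z), hφ'coe z, ← mul_assoc, hee, one_mul]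
  have hφ'φ : ∀ z, φ' (φ z) = z := by
    intro z
    apply Complex.UnitDisc.coe_injective
    rw [hφ'coe (φ z), hφ z, ← mul_assoc, mul_comm (Complex.exp (-(θ:ℂ) * Complex.I)) e,
      hee, one_mul]
  have hmapsB : ∀ f ∈ calB, f ∘ φ ∈ calB := fun f hf => comp_rot hf habs φ hφ
  refine ⟨fun f hf => (hTf f hf) ▸ hmapsB f hf, ?_, ?_, ?_, ?_, ?_⟩
  · intro f hf g hg
    rw [hTf f hf, hTf g hg, hTf (f + g) (add_mem_calB hf hg)]
    rfl
  · intro c f hf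
    rw [hTf f hf, hTf (c • f) (smul_mem_calB c hf)]
    rfl
  · intro f hf g hg
    rw [hTf f hf, hTf g hg, hTf (f * g) (mul_mem_calB hf hg)]
    rfl
  · intro f hf g hg h
    rw [hTf f hf, hTf g hg] at h
    funext w
    have := congrFun h (φ' w)
    simp only [Function.comp_apply, hφφ'] at this
    exact this
  · intro g hg
    refine ⟨g ∘ φ', comp_rot hg habs' φ' hφ'coe, ?_⟩
    rw [hTf _ (comp_rot hg habs' φ' hφ'coe)]
    funext w
    simp only [Function.comp_apply, hφ'φ]

end Stmt2Aux

/-- `T` is an algebra automorphism of `ℬ = {f ∈ H^∞ : f'(0) = 0}` iff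
`T f = f ∘ (z ↦ e^{iθ} z)` for some `θ ∈ ℝ`. -/
theorem stmt_2 (T : (𝔻 → ℂ) → (𝔻 → ℂ)) :
    IsAlgAutOn calB T ↔
      ∃ θ : ℝ, ∃ φ : 𝔻 → 𝔻,
        (∀ z : 𝔻, (↑(φ z) : ℂ) = Complex.exp (θ * Complex.I) * ↑z) ∧
        ∀ f ∈ calB, T f = f ∘ φ := by
  constructor
  · exact Stmt2Aux.forward
  · rintro ⟨θ, φ, hφ, hTf⟩
    exact Stmt2Aux.backward hφ hTf
end
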